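/- arXiv:math/0104111 — 4 statements merged into one kernel-verified Lean document; each statement's English description precedes it below -/
import Mathlib

section
/- Let S be a finite subset of Z^2, let K(x,y;t) = 1 - t sum_{(i,j) in S} x^i y^j, let S(x,y;t) in Q[x,x^{-1},y,y^{-1}][[t]] be the generating function for walks on the slit plane with steps in S, let S_0(x;t) be the generating function for bilateral walks on the slit plane, and let B(x;t) be the generating function for bilateral walks. Then, in Q[x,x^{-1},y,y^{-1}][[t]], K(x,y;t) * S(x,y;t) * B(x;t) = S_0(x;t). -/
open scoped Classical
open PowerSeries

namespace SlitPlane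

/-- A point (or step) of the lattice `ℤ²`. -/
abbrev Pt := ℤ × ℤ

/-- All steps of the walk `l` belong to `S`.  A walk is identified with its
list of steps; it starts at the origin. -/
def StepsIn (S : Finset Pt) (l : List Pt) : Prop := ∀ s ∈ l, s ∈ S

/-- The vertex `w_i` of the walk reached after `i` steps. -/
def vert (l : List Pt) (i : ℕ) : Pt := (l.take i).sum

/-- Membership in the half-line `H = {(k,0) : k ≤ 0}`. -/
def OnH (p : Pt) : Prop := p.2 = 0 ∧ p.1 ≤ 0

/-- Membership in the half-line `{(k,0) : k < 0}`. -/
def OnNegAxis (p : Pt) : Prop := p.2 = 0 ∧ p.1 < 0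

/-- A walk on the slit plane: none of the vertices `w_1, ..., w_n` lies on `H`. -/
def AvoidsH (l : List Pt) : Prop := ∀ i, 1 ≤ i → i ≤ l.length → ¬ OnH (vert l i)

/-- Number of walks of length `n` on the slit plane, with steps in `S`, ending at `e`. -/
noncomputable def slitCount (S : Finset Pt) (n : ℕ) (e : Pt) : ℕ :=
  Set.ncard {l : List Pt | l.length = n ∧ StepsIn S l ∧ AvoidsH l ∧ l.sum = e}

/-- Number of (unconstrained) walks of length `n` with steps in `S` ending at `e`. -/
noncomputable def walkCount (S : Finset Pt) (n : ℕ) (e : Pt) : ℕ :=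
  Set.ncard {l : List Pt | l.length = n ∧ StepsIn S l ∧ l.sum = e}

/-- Number of loops of length `n` with steps in `S`: walks ending at the origin,
none of whose vertices lies on `{(k,0) : k < 0}`. -/
noncomputable def loopCount (S : Finset Pt) (n : ℕ) : ℕ :=
  Set.ncard {l : List Pt | l.length = n ∧ StepsIn S l ∧
    (∀ i ≤ l.length, ¬ OnNegAxis (vert l i)) ∧ l.sum = (0, 0)}

end SlitPlane

namespace SlitPlane

/-- The Laurent polynomial ring `ℚ[x, x⁻¹]`: monomial `i` stands for `x^i`. -/
abbrev L1 := AddMonoidAlgebra ℚ ℤ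

/-- The Laurent polynomial ring `ℚ[x, x⁻¹, y, y⁻¹]`: monomial `(i,j)` stands for
`x^i y^j`. -/
abbrev L2 := AddMonoidAlgebra ℚ (ℤ × ℤ)

/-- The embedding `ℚ[x,x⁻¹] → ℚ[x,x⁻¹,y,y⁻¹]`. -/
noncomputable def iotaX : L1 →+* L2 :=
  AddMonoidAlgebra.mapDomainRingHom ℚ (AddMonoidHom.inl ℤ ℤ)

/-- The polynomial `K(x,y;t) = 1 - t ∑_{(i,j) ∈ S} x^i y^j`, as a power series in `t`. -/
noncomputable def Kpoly (S : Finset Pt) : PowerSeries L2 :=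
  1 - PowerSeries.X * PowerSeries.C (R := L2) (∑ s ∈ S, AddMonoidAlgebra.single s (1 : ℚ))

noncomputable def Wf (S : Finset Pt) : ℕ → Finset (List Pt)
  | 0 => {[]}
  | n+1 => ((S ×ˢ Wf S n).image (fun p => p.1 :: p.2))

lemma mem_Wf {S : Finset Pt} : ∀ {n : ℕ} {l : List Pt},
    l ∈ Wf S n ↔ l.length = n ∧ StepsIn S l := by
  intro n
  induction n with
  | zero =>
    intro l
    simp only [Wf, Finset.mem_singleton, List.length_eq_zero_iff]
    constructor
    · rintro rfl; exact ⟨rfl, fun s hs => by simp at hs⟩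
    · exact fun h => h.1
  | succ n ih =>
    intro l
    simp only [Wf, Finset.mem_image, Finset.mem_product]
    constructor
    · rintro ⟨⟨s, t⟩, ⟨hs, ht⟩, rfl⟩
      obtain ⟨h1, h2⟩ := ih.1 ht
      refine ⟨by simp [h1], ?_⟩
      intro a ha
      rcases List.mem_cons.1 ha with rfl | ha
      · exact hs
      · exact h2 a ha
    · rintro ⟨h1, h2⟩
      cases l with
      | nil => simp at h1
      | cons s t =>
        refine ⟨(s, t), ⟨h2 s (by simp), ih.2 ⟨by simpa using h1, fun a ha => h2 a (by simp [ha])⟩⟩, rfl⟩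

lemma slitCount_eq (S : Finset Pt) (n : ℕ) (e : Pt) :
    slitCount S n e = ((Wf S n).filter (fun l => AvoidsH l ∧ l.sum = e)).card := by
  rw [slitCount, ← Set.ncard_coe_finset]
  congr 1
  ext l
  simp [mem_Wf, Finset.mem_filter]
  tauto

lemma walkCount_eq (S : Finset Pt) (n : ℕ) (e : Pt) :
    walkCount S n e = ((Wf S n).filter (fun l => l.sum = e)).card := by
  rw [walkCount, ← Set.ncard_coe_finset]
  congr 1
  ext l
  simp [mem_Wf, Finset.mem_filter]
  tauto

lemma sum_single_apply {α G : Type*} [DecidableEq G] [AddCommMonoid G] (T : Finset α) (g : α → G) (i : G) :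
    (∑ l ∈ T, AddMonoidAlgebra.single (g l) (1:ℚ)).coeff i
      = ((T.filter (fun l => g l = i)).card : ℚ) := by
  classical
  rw [AddMonoidAlgebra.coeff_sum, Finset.sum_apply']
  rw [← Finset.sum_boole]
  apply Finset.sum_congr rfl
  intro l _
  rw [AddMonoidAlgebra.coeff_single, Finsupp.single_apply]


lemma vert_append_le {l r : List Pt} {i : ℕ} (h : i ≤ l.length) :
    vert (l ++ r) i = vert l i := by
  simp [vert, List.take_append_of_le_length h]

lemma vert_length (l : List Pt) : vert l l.length = l.sum := by
  simp [vert]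

def prefAvoid (l : List Pt) : Prop := ∀ i, 1 ≤ i → i < l.length → ¬ OnH (vert l i)

def FP (l : List Pt) : Prop := prefAvoid l ∧ OnH l.sum

lemma avoids_iff {l : List Pt} (h : l ≠ []) :
    AvoidsH l ↔ (prefAvoid l ∧ ¬ OnH l.sum) := by
  constructor
  · intro ha
    refine ⟨fun i h1 h2 => ha i h1 (le_of_lt h2), ?_⟩
    have := ha l.length (by
      have := List.length_pos_iff.2 h
      omega) le_rfl
    rwa [vert_length] at this
  · rintro ⟨hp, hs⟩ i h1 h2
    rcases lt_or_eq_of_le h2 with h2 | h2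
    · exact hp i h1 h2
    · rw [h2, vert_length]; exact hs

lemma stepExpand (S : Finset Pt) (n : ℕ) :
    (∑ s ∈ S, AddMonoidAlgebra.single s (1:ℚ)) *
      (∑ l ∈ (Wf S n).filter (fun l => AvoidsH l), AddMonoidAlgebra.single l.sum (1:ℚ))
    = ∑ l ∈ (Wf S (n+1)).filter (fun l => prefAvoid l), AddMonoidAlgebra.single l.sum (1:ℚ) := by
  rw [Finset.sum_mul_sum]
  simp only [AddMonoidAlgebra.single_mul_single, one_mul]
  rw [← Finset.sum_product']
  refine Finset.sum_bij' (fun p _ => p.2 ++ [p.1])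
    (fun l hl => (l.getLast (by
      rcases Finset.mem_filter.1 hl with ⟨hw, _⟩
      rcases mem_Wf.1 hw with ⟨hlen, _⟩
      intro hnil; rw [hnil] at hlen; simp at hlen), l.dropLast))
    ?_ ?_ ?_ ?_ ?_
  · -- hi
    rintro ⟨s, l⟩ hp
    rcases Finset.mem_product.1 hp with ⟨hs, hl⟩
    rcases Finset.mem_filter.1 hl with ⟨hw, hav⟩
    rcases mem_Wf.1 hw with ⟨hlen, hsteps⟩
    refine Finset.mem_filter.2 ⟨mem_Wf.2 ⟨by simp [hlen], ?_⟩, ?_⟩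
    · intro a ha
      rcases List.mem_append.1 ha with ha | ha
      · exact hsteps a ha
      · simp at ha; subst ha; exact hs
    · intro i h1 h2
      simp only [List.length_append, List.length_cons, List.length_nil, hlen] at h2
      rw [vert_append_le (by omega)]
      exact hav i h1 (by omega)
  · -- hj
    intro l hl
    rcases Finset.mem_filter.1 hl with ⟨hw, hpa⟩
    rcases mem_Wf.1 hw with ⟨hlen, hsteps⟩
    have hne : l ≠ [] := by intro hnil; rw [hnil] at hlen; simp at hlen
    refine Finset.mem_product.2 ⟨hsteps _ (List.getLast_mem _), ?_⟩
    refine Finset.mem_filter.2 ⟨mem_Wf.2 ⟨by simp [List.length_dropLast, hlen], fun a ha => hsteps a (List.mem_of_mem_dropLast ha)⟩, ?_⟩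
    intro i h1 h2
    rw [List.length_dropLast, hlen] at h2
    have hv : vert l.dropLast i = vert l i := by
      conv_rhs => rw [← List.dropLast_concat_getLast hne]
      rw [vert_append_le (by rw [List.length_dropLast, hlen]; omega)]
    rw [hv]
    exact hpa i h1 (by omega)
  · -- left_inv
    rintro ⟨s, l⟩ hp
    simp
  · -- right_inv
    intro l hl
    simp [List.dropLast_concat_getLast]
  · -- values
    rintro ⟨s, l⟩ hp
    simp [add_comm]

lemma splitPref (S : Finset Pt) (n : ℕ) :
    ∑ l ∈ (Wf S (n+1)).filter (fun l => prefAvoid l), AddMonoidAlgebra.single l.sum (1:ℚ)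
    = (∑ l ∈ (Wf S (n+1)).filter (fun l => AvoidsH l), AddMonoidAlgebra.single l.sum (1:ℚ))
      + ∑ l ∈ (Wf S (n+1)).filter (fun l => FP l), AddMonoidAlgebra.single l.sum (1:ℚ) := by
  rw [← Finset.sum_filter_add_sum_filter_not ((Wf S (n+1)).filter (fun l => prefAvoid l))
    (fun l => OnH l.sum), add_comm]
  congr 1
  · rw [Finset.filter_filter]
    apply Finset.sum_congr _ (fun _ _ => rfl)
    apply Finset.filter_congr
    intro l hl
    rcases mem_Wf.1 hl with ⟨hlen, _⟩
    have hne : l ≠ [] := by intro hnil; rw [hnil] at hlen; simp at hlen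
    rw [avoids_iff hne]
  · rw [Finset.filter_filter]
    apply Finset.sum_congr _ (fun _ _ => rfl)
    apply Finset.filter_congr
    intro l _
    simp [FP]


lemma vert_take {l : List Pt} {m j : ℕ} (h : j ≤ m) : vert (l.take m) j = vert l j := by
  simp [vert, List.take_take, Nat.min_eq_left h]

lemma sum_take_add_sum_drop (l : List Pt) (m : ℕ) :
    (l.take m).sum + (l.drop m).sum = l.sum := by
  rw [← List.sum_append, List.take_append_drop]

/-- The first hitting time of `H`, or `0` if the walk avoids `H`. -/
noncomputable def ht (l : List Pt) : ℕ :=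
  if h : ∃ m, 1 ≤ m ∧ m ≤ l.length ∧ OnH (vert l m) then Nat.find h else 0

lemma ht_spec {l : List Pt} (h : ¬ AvoidsH l) :
    1 ≤ ht l ∧ ht l ≤ l.length ∧ OnH (vert l (ht l)) ∧
      (∀ j, 1 ≤ j → j < ht l → ¬ OnH (vert l j)) := by
  have hex : ∃ m, 1 ≤ m ∧ m ≤ l.length ∧ OnH (vert l m) := by
    unfold AvoidsH at h; push_neg at h; exact h
  rw [ht, dif_pos hex]
  obtain ⟨h1, h2, h3⟩ := Nat.find_spec hex
  refine ⟨h1, h2, h3, fun j hj1 hj2 hOn => ?_⟩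
  exact Nat.find_min hex hj2 ⟨hj1, le_trans (le_of_lt hj2) h2 |>.trans (le_refl _) |> fun _ => by omega, hOn⟩

lemma ht_eq {l : List Pt} {m : ℕ} (h1 : 1 ≤ m) (h2 : m ≤ l.length)
    (h3 : OnH (vert l m)) (h4 : ∀ j, 1 ≤ j → j < m → ¬ OnH (vert l j)) :
    ht l = m := by
  have hex : ∃ m, 1 ≤ m ∧ m ≤ l.length ∧ OnH (vert l m) := ⟨m, h1, h2, h3⟩
  rw [ht, dif_pos hex]
  rw [Nat.find_eq_iff]
  exact ⟨⟨h1, h2, h3⟩, fun k hk hka => h4 k hka.1 hk hka.2.2⟩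

lemma keyB (S : Finset Pt) (n : ℕ) :
    (∑ l ∈ (Wf S n).filter (fun l => l.sum.2 = 0), AddMonoidAlgebra.single l.sum.1 (1:ℚ))
    = (∑ l ∈ (Wf S n).filter (fun l => l.sum.2 = 0 ∧ AvoidsH l),
        AddMonoidAlgebra.single l.sum.1 (1:ℚ))
      + ∑ i ∈ Finset.range n,
          (∑ a ∈ (Wf S (i+1)).filter (fun a => FP a), AddMonoidAlgebra.single a.sum.1 (1:ℚ)) *
          (∑ b ∈ (Wf S (n-(i+1))).filter (fun b => b.sum.2 = 0),
            AddMonoidAlgebra.single b.sum.1 (1:ℚ)) := by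
  rw [← Finset.sum_filter_add_sum_filter_not ((Wf S n).filter (fun l => l.sum.2 = 0))
    (fun l => AvoidsH l)]
  congr 1
  · rw [Finset.filter_filter]
  · rw [Finset.filter_filter]
    simp only [Finset.sum_mul_sum, AddMonoidAlgebra.single_mul_single, mul_one]
    have hrw : ∀ i ∈ Finset.range n,
        (∑ a ∈ (Wf S (i+1)).filter (fun a => FP a),
          ∑ b ∈ (Wf S (n-(i+1))).filter (fun b => b.sum.2 = 0),
            AddMonoidAlgebra.single (a.sum.1 + b.sum.1) (1:ℚ))
        = ∑ p ∈ ((Wf S (i+1)).filter (fun a => FP a)) ×ˢ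
            ((Wf S (n-(i+1))).filter (fun b => b.sum.2 = 0)),
            AddMonoidAlgebra.single (p.1.sum.1 + p.2.sum.1) (1:ℚ) := by
      intro i _
      rw [← Finset.sum_product']
    rw [Finset.sum_congr rfl hrw, Finset.sum_sigma']
    refine Finset.sum_bij' (fun l _ => ⟨ht l - 1, (l.take (ht l), l.drop (ht l))⟩)
      (fun p _ => p.2.1 ++ p.2.2) ?_ ?_ ?_ ?_ ?_
    · -- hi : image in sigma set
      intro l hl
      rcases Finset.mem_filter.1 hl with ⟨hw, hs2, hna⟩
      rcases mem_Wf.1 hw with ⟨hlen, hsteps⟩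
      obtain ⟨h1, h2, h3, h4⟩ := ht_spec hna
      set m := ht l with hm
      have hmem1 : l.take m ∈ (Wf S ((m - 1) + 1)).filter (fun a => FP a) := by
        refine Finset.mem_filter.2 ⟨mem_Wf.2 ⟨?_, fun a ha => hsteps a (List.take_subset _ _ ha)⟩, ?_, ?_⟩
        · rw [List.length_take]; omega
        · intro j hj1 hj2
          rw [List.length_take] at hj2
          rw [vert_take (by omega)]
          exact h4 j hj1 (by omega)
        · exact h3
      have hmem2 : l.drop m ∈ (Wf S (n - ((m - 1) + 1))).filter (fun b => b.sum.2 = 0) := by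
        refine Finset.mem_filter.2 ⟨mem_Wf.2 ⟨?_, fun a ha => hsteps a (List.drop_subset _ _ ha)⟩, ?_⟩
        · rw [List.length_drop]; omega
        · have hts := sum_take_add_sum_drop l m
          have h3' : (l.take m).sum.2 = 0 := h3.1
          have h2' : (l.take m).sum.2 + (l.drop m).sum.2 = l.sum.2 := by
            rw [← Prod.snd_add, hts]
          omega
      exact Finset.mem_sigma.2 ⟨Finset.mem_range.2 (show m - 1 < n by omega),
        Finset.mem_product.2 ⟨hmem1, hmem2⟩⟩
    · -- hj
      rintro ⟨k, a, b⟩ hp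
      rw [Finset.mem_sigma] at hp
      obtain ⟨hk, hab⟩ := hp
      dsimp only at hk hab ⊢
      rw [Finset.mem_range] at hk
      rcases Finset.mem_product.1 hab with ⟨ha, hb⟩
      dsimp only at ha hb
      rcases Finset.mem_filter.1 ha with ⟨haw, hFP⟩
      rcases mem_Wf.1 haw with ⟨halen, hasteps⟩
      rcases Finset.mem_filter.1 hb with ⟨hbw, hb2⟩
      rcases mem_Wf.1 hbw with ⟨hblen, hbsteps⟩
      refine Finset.mem_filter.2 ⟨mem_Wf.2 ⟨?_, ?_⟩, ?_, ?_⟩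
      · rw [List.length_append, halen, hblen]; omega
      · intro s hs
        rcases List.mem_append.1 hs with hs | hs
        · exact hasteps s hs
        · exact hbsteps s hs
      · have hsplit : a.sum + b.sum = (a ++ b).sum := (List.sum_append).symm
        have h2' : a.sum.2 + b.sum.2 = (a ++ b).sum.2 := by rw [← Prod.snd_add, hsplit]
        have ha2 : a.sum.2 = 0 := hFP.2.1
        omega
      · intro hav
        have hlen2 : k + 1 ≤ (a ++ b).length := by
          rw [List.length_append, halen]; omega
        have hOn := hav (k + 1) (by omega) hlen2
        rw [vert_append_le (by omega)] at hOn
        have hOn2 : ¬ OnH (vert a a.length) := by rwa [halen]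
        rw [vert_length] at hOn2
        exact hOn2 hFP.2
    · -- left_inv
      intro l _
      simp [List.take_append_drop]
    · -- right_inv
      rintro ⟨k, a, b⟩ hp
      rw [Finset.mem_sigma] at hp
      obtain ⟨hk, hab⟩ := hp
      dsimp only at hk hab ⊢
      rcases Finset.mem_product.1 hab with ⟨ha, hb⟩
      dsimp only at ha hb
      rcases Finset.mem_filter.1 ha with ⟨haw, hFP⟩
      rcases mem_Wf.1 haw with ⟨halen, _⟩
      have hht : ht (a ++ b) = k + 1 := by
        apply ht_eq
        · omega
        · rw [List.length_append, halen]; omega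
        · rw [vert_append_le (by omega)]
          have hva : vert a (k + 1) = a.sum := by rw [← halen, vert_length]
          rw [hva]; exact hFP.2
        · intro j hj1 hj2
          rw [vert_append_le (by omega)]
          exact hFP.1 j hj1 (by omega)
      have htake : (a ++ b).take (ht (a ++ b)) = a := by
        rw [hht]; exact List.take_left' halen
      have hdrop : (a ++ b).drop (ht (a ++ b)) = b := by
        rw [hht]; exact List.drop_left' halen
      rw [htake, hdrop, hht]
      simp
    · -- values
      intro l hl
      dsimp only
      have hts := sum_take_add_sum_drop l (ht l)
      have hfst : (l.take (ht l)).sum.1 + (l.drop (ht l)).sum.1 = l.sum.1 := by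
        rw [← Prod.fst_add, hts]
      rw [hfst]

lemma iotaX_single (k : ℤ) (c : ℚ) :
    iotaX (AddMonoidAlgebra.single k c) = AddMonoidAlgebra.single ((k, 0) : Pt) c := by
  have h : iotaX (AddMonoidAlgebra.single k c)
      = AddMonoidAlgebra.mapDomain (AddMonoidHom.inl ℤ ℤ) (AddMonoidAlgebra.single k c) := rfl
  rw [h, AddMonoidAlgebra.mapDomain_single]
  rfl

/-- `K(x,y;t) · S(x,y;t) · B(x;t) = S₀(x;t)` in `ℚ[x,x⁻¹,y,y⁻¹][[t]]`,
where `S` counts walks on the slit plane, `S₀` bilateral walks on the slit plane and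
`B` bilateral walks. -/
theorem statement7 (S : Finset Pt)
    (Sgf : PowerSeries L2) (S0 B : PowerSeries L1)
    (hS : ∀ (n : ℕ) (e : Pt),
      (PowerSeries.coeff (R := L2) n Sgf).coeff e = (slitCount S n e : ℚ))
    (hS0 : ∀ (n : ℕ) (i : ℤ),
      (PowerSeries.coeff (R := L1) n S0).coeff i = (slitCount S n (i, 0) : ℚ))
    (hB : ∀ (n : ℕ) (i : ℤ),
      (PowerSeries.coeff (R := L1) n B).coeff i = (walkCount S n (i, 0) : ℚ)) :
    Kpoly S * Sgf * PowerSeries.map iotaX B = PowerSeries.map iotaX S0 := by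
  classical
  set σ : L2 := ∑ s ∈ S, AddMonoidAlgebra.single s (1:ℚ) with hσ
  -- coefficient formulas
  have coeffS : ∀ n : ℕ, PowerSeries.coeff (R := L2) n Sgf
      = ∑ l ∈ (Wf S n).filter (fun l => AvoidsH l), AddMonoidAlgebra.single l.sum (1:ℚ) := by
    intro n
    apply AddMonoidAlgebra.ext
    apply Finsupp.ext
    intro e
    rw [hS n e, slitCount_eq, sum_single_apply, Finset.filter_filter]
  have coeffB : ∀ n : ℕ, PowerSeries.coeff (R := L1) n B
      = ∑ l ∈ (Wf S n).filter (fun l => l.sum.2 = 0), AddMonoidAlgebra.single l.sum.1 (1:ℚ) := by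
    intro n
    apply AddMonoidAlgebra.ext
    apply Finsupp.ext
    intro i
    rw [hB n i, walkCount_eq, sum_single_apply, Finset.filter_filter]
    congr 2
    apply Finset.filter_congr
    intro l _
    constructor
    · intro h; rw [h]; exact ⟨rfl, rfl⟩
    · rintro ⟨h2, h1⟩; exact Prod.ext_iff.2 ⟨h1, h2⟩
  have coeffS0 : ∀ n : ℕ, PowerSeries.coeff (R := L1) n S0
      = ∑ l ∈ (Wf S n).filter (fun l => l.sum.2 = 0 ∧ AvoidsH l),
          AddMonoidAlgebra.single l.sum.1 (1:ℚ) := by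
    intro n
    apply AddMonoidAlgebra.ext
    apply Finsupp.ext
    intro i
    rw [hS0 n i, slitCount_eq, sum_single_apply, Finset.filter_filter]
    congr 2
    apply Finset.filter_congr
    intro l _
    constructor
    · rintro ⟨hav, h⟩; rw [h]; exact ⟨⟨rfl, hav⟩, rfl⟩
    · rintro ⟨⟨h2, hav⟩, h1⟩; exact ⟨hav, Prod.ext_iff.2 ⟨h1, h2⟩⟩
  -- K * Sgf
  have hprod : Kpoly S * Sgf = Sgf - PowerSeries.X * (PowerSeries.C (R := L2) σ * Sgf) := by
    rw [Kpoly, ← hσ]; ring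
  have h0 : PowerSeries.coeff (R := L2) 0 Sgf = 1 := by
    rw [coeffS 0]
    have hW0 : (Wf S 0).filter (fun l => AvoidsH l) = ({[]} : Finset (List Pt)) := by
      rw [show Wf S 0 = ({[]} : Finset (List Pt)) from rfl, Finset.filter_singleton, if_pos]
      intro i h1 h2; simp at h2; omega
    rw [hW0, Finset.sum_singleton]
    exact (AddMonoidAlgebra.one_def).symm
  have hKS0 : PowerSeries.coeff (R := L2) 0 (Kpoly S * Sgf) = 1 := by
    rw [hprod, map_sub, h0, mul_comm PowerSeries.X, PowerSeries.coeff_zero_mul_X, sub_zero]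
  have hKSsucc : ∀ m : ℕ, PowerSeries.coeff (R := L2) (m+1) (Kpoly S * Sgf)
      = -(∑ l ∈ (Wf S (m+1)).filter (fun l => FP l), AddMonoidAlgebra.single l.sum (1:ℚ)) := by
    intro m
    rw [hprod, map_sub, PowerSeries.coeff_succ_X_mul, PowerSeries.coeff_C_mul,
      coeffS (m+1), coeffS m, hσ, stepExpand, splitPref]
    ring
  -- FP sums via iotaX
  have hFPio : ∀ m : ℕ, (∑ l ∈ (Wf S m).filter (fun l => FP l), AddMonoidAlgebra.single l.sum (1:ℚ))
      = iotaX (∑ l ∈ (Wf S m).filter (fun l => FP l), AddMonoidAlgebra.single l.sum.1 (1:ℚ)) := by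
    intro m
    rw [map_sum]
    apply Finset.sum_congr rfl
    intro l hl
    rcases Finset.mem_filter.1 hl with ⟨_, hFP⟩
    conv_lhs => rw [show l.sum = (l.sum.1, 0) from Prod.ext_iff.2 ⟨rfl, hFP.2.1⟩]
    rw [iotaX_single]
  -- assemble
  apply PowerSeries.ext
  intro n
  rw [PowerSeries.coeff_mul, Finset.Nat.sum_antidiagonal_eq_sum_range_succ_mk,
    Finset.sum_range_succ']
  simp only [PowerSeries.coeff_map]
  rw [hKS0, Nat.sub_zero, one_mul, coeffB n, coeffS0 n]
  have hterm : ∀ i ∈ Finset.range n,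
      PowerSeries.coeff (R := L2) (i+1) (Kpoly S * Sgf) * iotaX (PowerSeries.coeff (R := L1) (n - (i+1)) B)
      = -(iotaX ((∑ a ∈ (Wf S (i+1)).filter (fun a => FP a), AddMonoidAlgebra.single a.sum.1 (1:ℚ)) *
          (∑ b ∈ (Wf S (n-(i+1))).filter (fun b => b.sum.2 = 0), AddMonoidAlgebra.single b.sum.1 (1:ℚ)))) := by
    intro i _
    rw [hKSsucc i, hFPio (i+1), coeffB (n - (i+1)), map_mul, neg_mul]
  rw [Finset.sum_congr rfl hterm]
  have hneg : ∀ x ∈ Finset.range n,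
      -(iotaX ((∑ a ∈ (Wf S (x+1)).filter (fun a => FP a), AddMonoidAlgebra.single a.sum.1 (1:ℚ)) *
          (∑ b ∈ (Wf S (n-(x+1))).filter (fun b => b.sum.2 = 0), AddMonoidAlgebra.single b.sum.1 (1:ℚ))))
      = iotaX (-((∑ a ∈ (Wf S (x+1)).filter (fun a => FP a), AddMonoidAlgebra.single a.sum.1 (1:ℚ)) *
          (∑ b ∈ (Wf S (n-(x+1))).filter (fun b => b.sum.2 = 0), AddMonoidAlgebra.single b.sum.1 (1:ℚ)))) :=
    fun x _ => (map_neg iotaX _).symm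
  rw [Finset.sum_congr rfl hneg, ← map_sum, ← map_add]
  congr 1
  rw [keyB S n, Finset.sum_neg_distrib]
  ring

end SlitPlane
end

section
/- Let B(x;t) be a formal power series in t with coefficients in the Laurent polynomial ring R[x,x^{-1}] over the reals, with constant term B(x;0) = 1. Then there exists a unique triple (B_0(t), B_+(x;t), B_-(x^{-1};t)) of formal power series in t such that: B(x;t) = B_0(t) * B_+(x;t) * B_-(x^{-1};t); the coefficients of B_0 lie in R; the coefficients of B_+ lie in R[x]; the coefficients of B_- lie in R[x^{-1}]; and B_0(0) = B_+(x;0) = B_-(x^{-1};0) = B_+(0;t) = B_-(0;t) = 1 (i.e., each factor has constant term 1 as a series in t, and setting x = 0, respectively x^{-1} = 0, in B_+, respectively B_-, gives the constant series 1). -/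
open scoped Classical

namespace SlitPlane

/-- The Laurent polynomial ring `ℝ[x, x⁻¹]`: monomial `i` stands for `x^i`. -/
abbrev E1 := AddMonoidAlgebra ℝ ℤ

/-- `(B₀, B₊, B₋)` is a canonical factorization of `B`:
`B = B₀ B₊ B₋`, the coefficients of `B₊` lie in `ℝ[x]`, those of `B₋` in `ℝ[x⁻¹]`,
`B₀(0) = 1`, `B₊(x;0) = B₋(x⁻¹;0) = 1`, and `B₊(0;t) = B₋(0;t) = 1` (i.e. the
constant-in-`x` part of each coefficient of `B₊` and `B₋` vanishes in positive
degrees in `t`). -/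
def IsCanonicalFactorization (B : PowerSeries E1)
    (B0 : PowerSeries ℝ) (Bp Bm : PowerSeries E1) : Prop :=
  B = PowerSeries.map (algebraMap ℝ E1) B0 * Bp * Bm ∧
  (∀ (n : ℕ) (i : ℤ), i < 0 → (PowerSeries.coeff n Bp).coeff i = 0) ∧
  (∀ (n : ℕ) (i : ℤ), 0 < i → (PowerSeries.coeff n Bm).coeff i = 0) ∧
  PowerSeries.coeff 0 B0 = 1 ∧
  PowerSeries.coeff 0 Bp = 1 ∧
  PowerSeries.coeff 0 Bm = 1 ∧
  (∀ n : ℕ, 1 ≤ n → (PowerSeries.coeff n Bp).coeff 0 = 0) ∧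
  (∀ n : ℕ, 1 ≤ n → (PowerSeries.coeff n Bm).coeff 0 = 0)

open PowerSeries Finset

set_option maxHeartbeats 1000000

/-! ### Auxiliary two-factor factorization machinery -/

lemma mem_erase2 {n : ℕ} {p : ℕ × ℕ}
    (hp : p ∈ ((antidiagonal n).erase (n, 0)).erase (0, n)) :
    p.1 < n ∧ p.2 < n := by
  rcases Finset.mem_erase.1 hp with ⟨h1, hp'⟩
  rcases Finset.mem_erase.1 hp' with ⟨h2, h3⟩
  have hsum : p.1 + p.2 = n := Finset.HasAntidiagonal.mem_antidiagonal.1 h3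
  constructor
  · rcases Nat.lt_or_ge p.1 n with h | h
    · exact h
    · exact absurd (Prod.ext (by omega) (by omega)) h2
  · rcases Nat.lt_or_ge p.2 n with h | h
    · exact h
    · exact absurd (Prod.ext (by omega) (by omega)) h1

/-- One step of the recursion defining the two-factor factorization. -/
noncomputable def twoStep (B : PowerSeries E1) (π σ : E1 →+ E1) :
    (n : ℕ) → (∀ m, m < n → E1 × E1) → E1 × E1 := fun n ih =>
  if h : n = 0 then (1, 1)
  else
    (π (PowerSeries.coeff n B -
        ∑ p ∈ (((antidiagonal n).erase (n, 0)).erase (0, n)).attach,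
          (ih p.1.1 (mem_erase2 p.2).1).1 * (ih p.1.2 (mem_erase2 p.2).2).2),
     σ (PowerSeries.coeff n B -
        ∑ p ∈ (((antidiagonal n).erase (n, 0)).erase (0, n)).attach,
          (ih p.1.1 (mem_erase2 p.2).1).1 * (ih p.1.2 (mem_erase2 p.2).2).2))

/-- The coefficients of the two-factor factorization, by strong recursion. -/
noncomputable def twoF (B : PowerSeries E1) (π σ : E1 →+ E1) : ℕ → E1 × E1 :=
  WellFounded.fix wellFounded_lt (twoStep B π σ)

lemma twoF_eq (B : PowerSeries E1) (π σ : E1 →+ E1) (n : ℕ) :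
    twoF B π σ n = twoStep B π σ n (fun m _ => twoF B π σ m) :=
  WellFounded.fix_eq _ _ _

lemma twoF_zero (B : PowerSeries E1) (π σ : E1 →+ E1) : twoF B π σ 0 = (1, 1) := by
  rw [twoF_eq]; simp [twoStep]

/-- The remainder term in the degree-`n` equation. -/
noncomputable def twoR (B : PowerSeries E1) (π σ : E1 →+ E1) (n : ℕ) : E1 :=
  ∑ p ∈ ((antidiagonal n).erase (n, 0)).erase (0, n),
    (twoF B π σ p.1).1 * (twoF B π σ p.2).2

noncomputable def twoC (B : PowerSeries E1) (π σ : E1 →+ E1) (n : ℕ) : E1 :=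
  PowerSeries.coeff n B - twoR B π σ n

lemma twoF_of_ne (B : PowerSeries E1) (π σ : E1 →+ E1) {n : ℕ} (hn : n ≠ 0) :
    twoF B π σ n = (π (twoC B π σ n), σ (twoC B π σ n)) := by
  rw [twoF_eq]
  simp only [twoStep, dif_neg hn]
  have h : ∑ p ∈ (((antidiagonal n).erase (n, 0)).erase (0, n)).attach,
      (twoF B π σ p.1.1).1 * (twoF B π σ p.1.2).2 = twoR B π σ n := by
    rw [twoR]
    exact Finset.sum_attach (((antidiagonal n).erase (n, 0)).erase (0, n))
      (fun q => (twoF B π σ q.1).1 * (twoF B π σ q.2).2)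
  rw [twoC, ← h]

lemma twoF_mul (B : PowerSeries E1) (hB : PowerSeries.coeff 0 B = 1)
    (π σ : E1 →+ E1) (hcompl : ∀ y, π y + σ y = y) :
    B = PowerSeries.mk (fun n => (twoF B π σ n).1) *
        PowerSeries.mk (fun n => (twoF B π σ n).2) := by
  refine PowerSeries.ext fun n => ?_
  rcases eq_or_ne n 0 with rfl | hn
  · rw [PowerSeries.coeff_mul, Finset.Nat.antidiagonal_zero, Finset.sum_singleton,
      PowerSeries.coeff_mk, PowerSeries.coeff_mk, twoF_zero, hB]
    norm_num
  · rw [PowerSeries.coeff_mul]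
    have h1 : ((n : ℕ), (0 : ℕ)) ∈ antidiagonal n := by simp
    have h2 : ((0 : ℕ), (n : ℕ)) ∈ (antidiagonal n).erase (n, 0) := by
      rw [Finset.mem_erase]
      refine ⟨?_, by simp⟩
      simp only [ne_eq, Prod.ext_iff, not_and]
      omega
    rw [← Finset.add_sum_erase _ _ h1, ← Finset.add_sum_erase _ _ h2]
    simp only [PowerSeries.coeff_mk]
    have hrest : ∑ p ∈ ((antidiagonal n).erase (n, 0)).erase (0, n),
        (twoF B π σ p.1).1 * (twoF B π σ p.2).2 = twoR B π σ n := rfl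
    rw [hrest, twoF_zero, twoF_of_ne B π σ hn]
    dsimp only
    rw [mul_one, one_mul, ← add_assoc, hcompl (twoC B π σ n), twoC, sub_add_cancel]

lemma twoFac_exists (B : PowerSeries E1) (hB : PowerSeries.coeff 0 B = 1)
    (π σ : E1 →+ E1) (hcompl : ∀ y, π y + σ y = y) (hidem : ∀ y, π (π y) = π y) :
    ∃ P Q : PowerSeries E1, B = P * Q ∧
      PowerSeries.coeff 0 P = 1 ∧ PowerSeries.coeff 0 Q = 1 ∧
      (∀ n, 1 ≤ n → σ (PowerSeries.coeff n P) = 0) ∧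
      (∀ n, 1 ≤ n → π (PowerSeries.coeff n Q) = 0) := by
  have hσπ : ∀ y, σ (π y) = 0 := fun y => by
    have h := hcompl (π y)
    rw [hidem] at h
    exact left_eq_add.1 h.symm
  have hπσ : ∀ y, π (σ y) = 0 := fun y => by
    have h1 : σ y = y - π y := eq_sub_of_add_eq' (hcompl y)
    rw [h1, map_sub, hidem, sub_self]
  refine ⟨PowerSeries.mk (fun n => (twoF B π σ n).1),
          PowerSeries.mk (fun n => (twoF B π σ n).2),
          twoF_mul B hB π σ hcompl, ?_, ?_, ?_, ?_⟩
  · rw [PowerSeries.coeff_mk, twoF_zero]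
  · rw [PowerSeries.coeff_mk, twoF_zero]
  · intro n hn
    rw [PowerSeries.coeff_mk, twoF_of_ne B π σ (by omega)]
    exact hσπ _
  · intro n hn
    rw [PowerSeries.coeff_mk, twoF_of_ne B π σ (by omega)]
    exact hπσ _

lemma twoFac_unique (π σ : E1 →+ E1) (hcompl : ∀ y, π y + σ y = y)
    (B P Q P' Q' : PowerSeries E1)
    (hPQ : B = P * Q) (hPQ' : B = P' * Q')
    (hP0 : PowerSeries.coeff 0 P = 1) (hQ0 : PowerSeries.coeff 0 Q = 1)
    (hP0' : PowerSeries.coeff 0 P' = 1) (hQ0' : PowerSeries.coeff 0 Q' = 1)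
    (hσ : ∀ n, 1 ≤ n → σ (PowerSeries.coeff n P) = 0)
    (hπ : ∀ n, 1 ≤ n → π (PowerSeries.coeff n Q) = 0)
    (hσ' : ∀ n, 1 ≤ n → σ (PowerSeries.coeff n P') = 0)
    (hπ' : ∀ n, 1 ≤ n → π (PowerSeries.coeff n Q') = 0) :
    P = P' ∧ Q = Q' := by
  have key : ∀ n : ℕ, PowerSeries.coeff n P = PowerSeries.coeff n P' ∧
      PowerSeries.coeff n Q = PowerSeries.coeff n Q' := by
    intro n
    induction n using Nat.strong_induction_on with
    | _ n ih =>
      rcases eq_or_ne n 0 with rfl | hn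
      · rw [hP0, hQ0, hP0', hQ0']; exact ⟨rfl, rfl⟩
      · have hn1 : 1 ≤ n := by omega
        have h1 : ((n : ℕ), (0 : ℕ)) ∈ antidiagonal n := by simp
        have h2 : ((0 : ℕ), (n : ℕ)) ∈ (antidiagonal n).erase (n, 0) := by
          rw [Finset.mem_erase]
          refine ⟨?_, by simp⟩
          simp only [ne_eq, Prod.ext_iff, not_and]
          omega
        have e : PowerSeries.coeff n (P * Q) = PowerSeries.coeff n (P' * Q') := by
          rw [← hPQ, ← hPQ']
        rw [PowerSeries.coeff_mul, PowerSeries.coeff_mul,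
          ← Finset.add_sum_erase _ _ h1, ← Finset.add_sum_erase _ _ h2,
          ← Finset.add_sum_erase _ _ h1, ← Finset.add_sum_erase _ _ h2] at e
        have hrest : ∑ p ∈ ((antidiagonal n).erase (n, 0)).erase (0, n),
            PowerSeries.coeff p.1 P * PowerSeries.coeff p.2 Q =
            ∑ p ∈ ((antidiagonal n).erase (n, 0)).erase (0, n),
            PowerSeries.coeff p.1 P' * PowerSeries.coeff p.2 Q' := by
          refine Finset.sum_congr rfl fun p hp => ?_
          obtain ⟨hplt, hqlt⟩ := mem_erase2 hp
          rw [(ih p.1 hplt).1, (ih p.2 hqlt).2]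
        rw [hrest, hP0, hQ0, hP0', hQ0', mul_one, mul_one, one_mul, one_mul,
          ← add_assoc, ← add_assoc] at e
        have e2 : PowerSeries.coeff n P + PowerSeries.coeff n Q =
            PowerSeries.coeff n P' + PowerSeries.coeff n Q' :=
          add_right_cancel e
        have hfix : ∀ y : E1, σ y = 0 → π y = y := fun y hy => by
          have h := hcompl y; rw [hy, add_zero] at h; exact h
        have eP : PowerSeries.coeff n P = PowerSeries.coeff n P' := by
          have h := congrArg π e2
          rw [map_add, map_add, hπ n hn1, hπ' n hn1, add_zero, add_zero,
            hfix _ (hσ n hn1), hfix _ (hσ' n hn1)] at h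
          exact h
        refine ⟨eP, ?_⟩
        rw [eP] at e2
        exact add_left_cancel e2
  exact ⟨PowerSeries.ext fun n => (key n).1, PowerSeries.ext fun n => (key n).2⟩

/-! ### The concrete projections -/

noncomputable def pNN : E1 →+ E1 where
  toFun y := AddMonoidAlgebra.ofCoeff (y.coeff.filter (fun i => 0 ≤ i))
  map_zero' := by simp [Finsupp.filter_zero]
  map_add' := fun a b => by
    rw [AddMonoidAlgebra.coeff_add, Finsupp.filter_add, AddMonoidAlgebra.ofCoeff_add]

noncomputable def pNeg : E1 →+ E1 where
  toFun y := AddMonoidAlgebra.ofCoeff (y.coeff.filter (fun i => i < 0))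
  map_zero' := by simp [Finsupp.filter_zero]
  map_add' := fun a b => by
    rw [AddMonoidAlgebra.coeff_add, Finsupp.filter_add, AddMonoidAlgebra.ofCoeff_add]

noncomputable def pZero : E1 →+ E1 where
  toFun y := AddMonoidAlgebra.single 0 (y.coeff 0)
  map_zero' := by simp
  map_add' := fun a b => by
    show AddMonoidAlgebra.single (0 : ℤ) ((a + b).coeff 0) = _
    rw [AddMonoidAlgebra.coeff_add, Finsupp.add_apply, AddMonoidAlgebra.single_add]

noncomputable def pErase : E1 →+ E1 where
  toFun y := y.erase 0
  map_zero' := AddMonoidAlgebra.erase_zero _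
  map_add' := fun a b => by
    show AddMonoidAlgebra.ofCoeff ((a + b).coeff.erase 0) =
      AddMonoidAlgebra.ofCoeff (a.coeff.erase 0) + AddMonoidAlgebra.ofCoeff (b.coeff.erase 0)
    rw [AddMonoidAlgebra.coeff_add, Finsupp.erase_add, AddMonoidAlgebra.ofCoeff_add]

lemma hcompl1 : ∀ y : E1, pNN y + pNeg y = y := by
  intro y
  ext i
  rw [AddMonoidAlgebra.coeff_add, Finsupp.add_apply]
  show y.coeff.filter (fun i => 0 ≤ i) i + y.coeff.filter (fun i => i < 0) i = y.coeff i
  rw [Finsupp.filter_apply, Finsupp.filter_apply]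
  split_ifs with h1 h2 <;> first | omega | simp

lemma hidem1 : ∀ y : E1, pNN (pNN y) = pNN y := by
  intro y
  ext i
  show (y.coeff.filter (fun i => 0 ≤ i)).filter (fun i => 0 ≤ i) i = y.coeff.filter (fun i => 0 ≤ i) i
  rw [Finsupp.filter_apply, Finsupp.filter_apply]
  split_ifs <;> simp

lemma hcompl2 : ∀ y : E1, pZero y + pErase y = y := fun y =>
  AddMonoidAlgebra.single_add_erase 0 y

lemma hidem2 : ∀ y : E1, pZero (pZero y) = pZero y := by
  intro y
  show AddMonoidAlgebra.single 0 ((AddMonoidAlgebra.single (0 : ℤ) (y.coeff 0)).coeff 0) =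
    AddMonoidAlgebra.single 0 (y.coeff 0)
  rw [AddMonoidAlgebra.coeff_single, Finsupp.single_eq_same]

/-- Evaluating a coefficient of `map (algebraMap ℝ E1) B0 * Bp` at a point. -/
lemma coeff_map_mul_apply (B0 : PowerSeries ℝ) (Bp : PowerSeries E1) (n : ℕ) (i : ℤ) :
    (PowerSeries.coeff n (PowerSeries.map (algebraMap ℝ E1) B0 * Bp)).coeff i
      = ∑ p ∈ antidiagonal n, (PowerSeries.coeff p.1 B0) * ((PowerSeries.coeff p.2 Bp).coeff i) := by
  rw [PowerSeries.coeff_mul]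
  rw [AddMonoidAlgebra.coeff_sum, Finset.sum_apply']
  refine Finset.sum_congr rfl fun p _ => ?_
  rw [PowerSeries.coeff_map, ← Algebra.smul_def]
  exact AddMonoidAlgebra.coeff_smul_apply _ _ _

/-- the factorization lemma: any `B ∈ ℝ[x,x⁻¹][[t]]` with `B(x;0) = 1`
admits a unique canonical factorization `B = B₀ B₊ B₋`. -/
theorem statement8 (B : PowerSeries E1)
    (hB : PowerSeries.coeff 0 B = 1) :
    ∃! T : PowerSeries ℝ × PowerSeries E1 × PowerSeries E1,
      IsCanonicalFactorization B T.1 T.2.1 T.2.2 := by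
  obtain ⟨P, Bm, hfac1, hP0, hBm0, hPneg, hBmnn⟩ :=
    twoFac_exists B hB pNN pNeg hcompl1 hidem1
  obtain ⟨P0', Bp, hfac2, hP0'0, hBp0, hP0'c, hBpc⟩ :=
    twoFac_exists P hP0 pZero pErase hcompl2 hidem2
  set B0 : PowerSeries ℝ := PowerSeries.mk (fun n => (PowerSeries.coeff n P0').coeff 0) with hB0def
  have halg : ∀ r : ℝ, algebraMap ℝ E1 r = AddMonoidAlgebra.single 0 r := by
    intro r; rw [AddMonoidAlgebra.coe_algebraMap]; simp
  have hone : (1 : E1) = AddMonoidAlgebra.single 0 1 := AddMonoidAlgebra.one_def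
  have hP0'single : ∀ n : ℕ, PowerSeries.coeff n P0' =
      AddMonoidAlgebra.single 0 ((PowerSeries.coeff n P0').coeff 0) := by
    intro n
    rcases eq_or_ne n 0 with rfl | hn
    · rw [hP0'0, hone, AddMonoidAlgebra.coeff_single, Finsupp.single_eq_same]
    · have he : (PowerSeries.coeff n P0').erase 0 = 0 := hP0'c n (by omega)
      have h := AddMonoidAlgebra.single_add_erase 0 (PowerSeries.coeff n P0')
      rw [he, add_zero] at h
      exact h.symm
  have hmap : PowerSeries.map (algebraMap ℝ E1) B0 = P0' := by
    refine PowerSeries.ext fun n => ?_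
    rw [PowerSeries.coeff_map, hB0def, PowerSeries.coeff_mk, halg]
    exact (hP0'single n).symm
  have hB00 : PowerSeries.coeff 0 B0 = 1 := by
    rw [hB0def, PowerSeries.coeff_mk, hP0'0, hone, AddMonoidAlgebra.coeff_single, Finsupp.single_eq_same]
  have hPpt : ∀ (n : ℕ) (i : ℤ), i < 0 → (PowerSeries.coeff n P).coeff i = 0 := by
    intro n i hi
    rcases eq_or_ne n 0 with rfl | hn
    · rw [hP0, hone, AddMonoidAlgebra.coeff_single, Finsupp.single_apply, if_neg (by omega)]
    · have he : (PowerSeries.coeff n P).coeff.filter (fun j => j < 0) = 0 :=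
          AddMonoidAlgebra.ofCoeff_eq_zero.1 (hPneg n (by omega))
      have h2 := Finsupp.filter_apply_pos (fun j => j < 0) (PowerSeries.coeff n P).coeff hi
      rw [he] at h2
      simp only [Finsupp.coe_zero, Pi.zero_apply] at h2
      exact h2.symm
  have hfac2' : P = PowerSeries.map (algebraMap ℝ E1) B0 * Bp := by rw [hmap]; exact hfac2
  have hBpneg : ∀ (n : ℕ) (i : ℤ), i < 0 → (PowerSeries.coeff n Bp).coeff i = 0 := by
    intro n
    induction n using Nat.strong_induction_on with
    | _ n ih =>
      intro i hi
      have h0 : (PowerSeries.coeff n P).coeff i = 0 := hPpt n i hi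
      rw [hfac2', coeff_map_mul_apply] at h0
      have h2 : ((0 : ℕ), (n : ℕ)) ∈ antidiagonal n := by simp
      rw [← Finset.add_sum_erase _ _ h2] at h0
      have hz : ∑ p ∈ (antidiagonal n).erase (0, n),
          (PowerSeries.coeff p.1 B0) * ((PowerSeries.coeff p.2 Bp).coeff i) = 0 := by
        refine Finset.sum_eq_zero fun p hp => ?_
        rcases Finset.mem_erase.1 hp with ⟨hne, hmem⟩
        have hsum : p.1 + p.2 = n := Finset.HasAntidiagonal.mem_antidiagonal.1 hmem
        have hlt : p.2 < n := by
          rcases Nat.lt_or_ge p.2 n with h | h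
          · exact h
          · exact absurd (Prod.ext (by omega) (by omega)) hne
        rw [ih p.2 hlt i hi, mul_zero]
      rw [hz, add_zero, hB00, one_mul] at h0
      exact h0
  have hBmpos : ∀ (n : ℕ) (i : ℤ), 0 < i → (PowerSeries.coeff n Bm).coeff i = 0 := by
    intro n i hi
    rcases eq_or_ne n 0 with rfl | hn
    · rw [hBm0, hone, AddMonoidAlgebra.coeff_single, Finsupp.single_apply, if_neg (by omega)]
    · have he : (PowerSeries.coeff n Bm).coeff.filter (fun j => 0 ≤ j) = 0 :=
          AddMonoidAlgebra.ofCoeff_eq_zero.1 (hBmnn n (by omega))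
      have h2 := Finsupp.filter_apply_pos (fun j => 0 ≤ j) (PowerSeries.coeff n Bm).coeff
        (le_of_lt hi)
      rw [he] at h2
      simp only [Finsupp.coe_zero, Pi.zero_apply] at h2
      exact h2.symm
  have hBp00 : ∀ n : ℕ, 1 ≤ n → (PowerSeries.coeff n Bp).coeff 0 = 0 := by
    intro n hn
    have h : AddMonoidAlgebra.single (0 : ℤ) ((PowerSeries.coeff n Bp).coeff 0) = 0 := hBpc n hn
    exact AddMonoidAlgebra.single_eq_zero.1 h
  have hBm00 : ∀ n : ℕ, 1 ≤ n → (PowerSeries.coeff n Bm).coeff 0 = 0 := by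
    intro n hn
    have he : (PowerSeries.coeff n Bm).coeff.filter (fun j => 0 ≤ j) = 0 :=
        AddMonoidAlgebra.ofCoeff_eq_zero.1 (hBmnn n hn)
    have h2 := Finsupp.filter_apply_pos (fun j => 0 ≤ j) (PowerSeries.coeff n Bm).coeff
      (le_refl (0 : ℤ))
    rw [he] at h2
    simp only [Finsupp.coe_zero, Pi.zero_apply] at h2
    exact h2.symm
  refine ⟨(B0, Bp, Bm), ⟨?_, hBpneg, hBmpos, hB00, hBp0, hBm0, hBp00, hBm00⟩, ?_⟩
  · rw [← hfac2', hfac1]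
  · rintro ⟨B0', Bp', Bm'⟩ ⟨hfac', hBpneg', hBmpos', hB00', hBp0', hBm0', hBp00', hBm00'⟩
    have hP0c' : PowerSeries.coeff 0 (PowerSeries.map (algebraMap ℝ E1) B0' * Bp') = 1 := by
      rw [PowerSeries.coeff_mul, Finset.Nat.antidiagonal_zero, Finset.sum_singleton,
        PowerSeries.coeff_map, hB00', hBp0', map_one, one_mul]
    have hσ1' : ∀ n, 1 ≤ n →
        pNeg (PowerSeries.coeff n (PowerSeries.map (algebraMap ℝ E1) B0' * Bp')) = 0 := by
      intro n _
      show AddMonoidAlgebra.ofCoeff ((PowerSeries.coeff n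
        (PowerSeries.map (algebraMap ℝ E1) B0' * Bp')).coeff.filter (fun j => j < 0)) = 0
      rw [AddMonoidAlgebra.ofCoeff_eq_zero, Finsupp.filter_eq_zero_iff]
      intro i hi
      rw [coeff_map_mul_apply]
      refine Finset.sum_eq_zero fun p _ => ?_
      rw [hBpneg' p.2 i hi, mul_zero]
    have hπ1' : ∀ n, 1 ≤ n → pNN (PowerSeries.coeff n Bm') = 0 := by
      intro n hn
      show AddMonoidAlgebra.ofCoeff ((PowerSeries.coeff n Bm').coeff.filter (fun j => 0 ≤ j)) = 0
      rw [AddMonoidAlgebra.ofCoeff_eq_zero, Finsupp.filter_eq_zero_iff]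
      intro i hi
      rcases eq_or_lt_of_le hi with h | h
      · rw [← h]; exact hBm00' n hn
      · exact hBmpos' n i h
    obtain ⟨hPeq, hBmeq⟩ := twoFac_unique pNN pNeg hcompl1 B
      (PowerSeries.map (algebraMap ℝ E1) B0' * Bp') Bm' P Bm
      hfac' hfac1 hP0c' hBm0' hP0 hBm0 hσ1' hπ1' hPneg hBmnn
    have hmap0' : ∀ n : ℕ, PowerSeries.coeff n (PowerSeries.map (algebraMap ℝ E1) B0') =
        AddMonoidAlgebra.single 0 (PowerSeries.coeff n B0') := by
      intro n; rw [PowerSeries.coeff_map, halg]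
    have hσ2' : ∀ n, 1 ≤ n →
        pErase (PowerSeries.coeff n (PowerSeries.map (algebraMap ℝ E1) B0')) = 0 := by
      intro n _
      show (PowerSeries.coeff n (PowerSeries.map (algebraMap ℝ E1) B0')).erase 0 = 0
      rw [hmap0' n]
      exact AddMonoidAlgebra.erase_single _ _
    have hπ2' : ∀ n, 1 ≤ n → pZero (PowerSeries.coeff n Bp') = 0 := by
      intro n hn
      show AddMonoidAlgebra.single (0 : ℤ) ((PowerSeries.coeff n Bp').coeff 0) = 0
      rw [hBp00' n hn, AddMonoidAlgebra.single_zero]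
    have hB0'0c : PowerSeries.coeff 0 (PowerSeries.map (algebraMap ℝ E1) B0') = 1 := by
      rw [PowerSeries.coeff_map, hB00', map_one]
    obtain ⟨hmapeq, hBpeq⟩ := twoFac_unique pZero pErase hcompl2 P
      (PowerSeries.map (algebraMap ℝ E1) B0') Bp' P0' Bp
      hPeq.symm hfac2 hB0'0c hBp0' hP0'0 hBp0 hσ2' hπ2' hP0'c hBpc
    have hB0eq : B0' = B0 := by
      refine PowerSeries.ext fun n => ?_
      rw [hB0def, PowerSeries.coeff_mk]
      have h := congrArg (fun f : E1 => f.coeff 0) (congrArg (PowerSeries.coeff n) hmapeq)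
      rw [hmap0' n, AddMonoidAlgebra.coeff_single, Finsupp.single_eq_same] at h
      exact h
    exact Prod.ext hB0eq (Prod.ext hBpeq hBmeq)

end SlitPlane
end

section
/- Let B(x;t) be a formal power series in t with coefficients in R[x,x^{-1}], with B(x;0)=1, and suppose B is in fact a Laurent polynomial, i.e. B lies in R[x,x^{-1},t]. Let (B_0(t), B_+(x;t), B_-(x^{-1};t)) be the canonical factorization of B. Then B_+(x;t) is a polynomial in x with coefficients in R[[t]], B_-(x^{-1};t) is a polynomial in x^{-1} with coefficients in R[[t]], and each factor is algebraic: there exist nonzero polynomials P_0 in R[t][Y], P_+ in R[x,t][Y] and P_- in R[u,t][Y] such that P_0(B_0(t)) = 0, P_+(B_+(x;t)) = 0 and P_-(B_-(u;t)) = 0 (with u standing for x^{-1}). -/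
open scoped Classical

namespace SlitPlane

/-- Evaluation `ℝ[x,t] → ℝ[x,x⁻¹][[t]]` sending the variable `0` to `x` and the
variable `1` to `t`. -/
noncomputable def evalXT : MvPolynomial (Fin 2) ℝ →+* PowerSeries E1 :=
  MvPolynomial.eval₂Hom (algebraMap ℝ (PowerSeries E1))
    (fun j => if j = 0 then PowerSeries.C (AddMonoidAlgebra.single (1 : ℤ) 1)
              else PowerSeries.X)

/-- Evaluation `ℝ[u,t] → ℝ[x,x⁻¹][[t]]` sending the variable `0` to `u = x⁻¹` and the
variable `1` to `t`. -/
noncomputable def evalUT : MvPolynomial (Fin 2) ℝ →+* PowerSeries E1 :=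
  MvPolynomial.eval₂Hom (algebraMap ℝ (PowerSeries E1))
    (fun j => if j = 0 then PowerSeries.C (AddMonoidAlgebra.single (-1 : ℤ) 1)
              else PowerSeries.X)


private abbrev RS := PowerSeries ℝ

noncomputable def liftR : RS →+* PowerSeries E1 := PowerSeries.map (algebraMap ℝ E1)

noncomputable def psi (e : ℤ) : Polynomial RS →+* PowerSeries E1 :=
  Polynomial.eval₂RingHom liftR (PowerSeries.C (AddMonoidAlgebra.single e 1))

lemma coeff_psi (e : ℤ) (f : Polynomial RS) (n : ℕ) :
    PowerSeries.coeff n (psi e f) =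
      ∑ i ∈ f.support, AddMonoidAlgebra.single ((i : ℤ) * e)
        ((PowerSeries.coeff n) (f.coeff i)) := by
  rw [psi, Polynomial.coe_eval₂RingHom, Polynomial.eval₂_eq_sum, Polynomial.sum, map_sum]
  refine Finset.sum_congr rfl fun i hi => ?_
  rw [← map_pow, PowerSeries.coeff_mul_C, liftR, PowerSeries.coeff_map,
    AddMonoidAlgebra.single_pow, one_pow, AddMonoidAlgebra.coe_algebraMap]
  show AddMonoidAlgebra.single 0 (algebraMap ℝ ℝ _) * AddMonoidAlgebra.single (i • e) 1 = _
  rw [AddMonoidAlgebra.single_mul_single, zero_add, mul_one, nsmul_eq_mul]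
  norm_num

lemma coeff_psi_apply_one (f : Polynomial RS) (n : ℕ) (ℓ : ℤ) :
    (PowerSeries.coeff n (psi 1 f)).coeff ℓ =
      if 0 ≤ ℓ then (PowerSeries.coeff n) (f.coeff ℓ.toNat) else 0 := by
  rw [coeff_psi, AddMonoidAlgebra.coeff_sum, Finset.sum_apply']
  simp only [mul_one, AddMonoidAlgebra.coeff_single, Finsupp.single_apply]
  by_cases h : 0 ≤ ℓ
  · rw [if_pos h, Finset.sum_eq_single ℓ.toNat
      (fun b _ hb => if_neg (by omega))
      (fun hm => by rw [if_pos (by omega), Polynomial.notMem_support_iff.mp hm, map_zero])]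
    rw [if_pos (by omega)]
  · rw [if_neg h]
    exact Finset.sum_eq_zero fun b _ => if_neg (by omega)

lemma coeff_psi_apply_neg_one (f : Polynomial RS) (n : ℕ) (ℓ : ℤ) :
    (PowerSeries.coeff n (psi (-1) f)).coeff ℓ =
      if ℓ ≤ 0 then (PowerSeries.coeff n) (f.coeff (-ℓ).toNat) else 0 := by
  rw [coeff_psi, AddMonoidAlgebra.coeff_sum, Finset.sum_apply']
  simp only [mul_neg_one, AddMonoidAlgebra.coeff_single, Finsupp.single_apply]
  by_cases h : ℓ ≤ 0
  · rw [if_pos h, Finset.sum_eq_single (-ℓ).toNat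
      (fun b _ hb => if_neg (by omega))
      (fun hm => by rw [if_pos (by omega), Polynomial.notMem_support_iff.mp hm, map_zero])]
    rw [if_pos (by omega)]
  · rw [if_neg h]
    exact Finset.sum_eq_zero fun b _ => if_neg (by omega)

lemma psi_one_injective : Function.Injective (psi 1) := by
  intro f g hfg
  ext i n
  have := congrArg (fun z => (PowerSeries.coeff n z).coeff (i : ℤ)) hfg
  simpa only [coeff_psi_apply_one, if_pos (Int.natCast_nonneg i), Int.toNat_natCast] using this




/-- vanishing of a product coefficient when supports are incompatible -/
lemma mul_apply_eq_zero (f g : E1) (i : ℤ)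
    (h : ∀ j k : ℤ, j + k = i → f.coeff j = 0 ∨ g.coeff k = 0) : (f * g).coeff i = 0 := by
  rw [AddMonoidAlgebra.coeff_mul, Finsupp.sum]
  refine Finset.sum_eq_zero fun j _ => ?_
  rw [Finsupp.sum]
  refine Finset.sum_eq_zero fun k _ => ?_
  split_ifs with hjk
  · rcases h j k hjk with h' | h' <;> rw [h'] <;> simp
  · rfl


lemma bpbm_bound (B : PowerSeries E1) (B0 : PowerSeries ℝ) (Bp Bm : PowerSeries E1)
    (heq : B = PowerSeries.map (algebraMap ℝ E1) B0 * Bp * Bm)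
    (hB00 : PowerSeries.coeff 0 B0 = 1)
    (d : ℕ) (hd : ∀ (n : ℕ) (i : ℤ), (d : ℤ) < |i| → (PowerSeries.coeff n B).coeff i = 0) :
    ∀ (n : ℕ) (i : ℤ), (d : ℤ) < |i| → (PowerSeries.coeff n (Bp * Bm)).coeff i = 0 := by
  intro n
  induction n using Nat.strong_induction_on with
  | _ n IH =>
    intro i hi
    have h0 := hd n i hi
    rw [heq, mul_assoc, PowerSeries.coeff_mul] at h0
    rw [AddMonoidAlgebra.coeff_sum, Finset.sum_apply'] at h0
    rw [Finset.sum_eq_single (0, n) (fun p hp hne => ?_) (fun h => absurd (by simp) h)] at h0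
    · rw [PowerSeries.coeff_map, AddMonoidAlgebra.coe_algebraMap] at h0
      simp only [Function.comp_apply] at h0
      rw [show (algebraMap ℝ ℝ) (PowerSeries.coeff 0 B0) = 1 by simp [hB00]] at h0
      rwa [AddMonoidAlgebra.coeff_single_zero_mul, one_mul] at h0
    · have hp' := Finset.HasAntidiagonal.mem_antidiagonal.mp hp
      have hlt : p.2 < n := by
        rcases Nat.eq_zero_or_pos p.1 with h1 | h1
        · exact absurd (by cases p; simp_all) hne
        · omega
      rw [PowerSeries.coeff_map, AddMonoidAlgebra.coe_algebraMap]
      simp only [Function.comp_apply]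
      rw [AddMonoidAlgebra.coeff_single_zero_mul, IH p.2 hlt i hi, mul_zero]

lemma bp_bm_bounds (B : PowerSeries E1) (B0 : PowerSeries ℝ) (Bp Bm : PowerSeries E1)
    (heq : B = PowerSeries.map (algebraMap ℝ E1) B0 * Bp * Bm)
    (hB00 : PowerSeries.coeff 0 B0 = 1)
    (hBpneg : ∀ (n : ℕ) (i : ℤ), i < 0 → (PowerSeries.coeff n Bp).coeff i = 0)
    (hBmpos : ∀ (n : ℕ) (i : ℤ), 0 < i → (PowerSeries.coeff n Bm).coeff i = 0)
    (hBp0 : PowerSeries.coeff 0 Bp = 1)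
    (hBm0 : PowerSeries.coeff 0 Bm = 1)
    (d : ℕ) (hd : ∀ (n : ℕ) (i : ℤ), (d : ℤ) < |i| → (PowerSeries.coeff n B).coeff i = 0) :
    ∀ (n : ℕ) (i : ℤ), ((d : ℤ) < i → (PowerSeries.coeff n Bp).coeff i = 0) ∧
      (i < -(d : ℤ) → (PowerSeries.coeff n Bm).coeff i = 0) := by
  have key := bpbm_bound B B0 Bp Bm heq hB00 d hd
  intro n
  induction n using Nat.strong_induction_on with
  | _ n IH =>
    intro i
    constructor
    · intro hi
      have h0 := key n i (by rw [abs_of_nonneg (by omega : (0:ℤ) ≤ i)]; exact hi)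
      rw [PowerSeries.coeff_mul, AddMonoidAlgebra.coeff_sum, Finset.sum_apply',
        Finset.sum_eq_single (n, 0) (fun p hp hne => ?_) (fun h => absurd (by simp) h)] at h0
      · rwa [hBm0, mul_one] at h0
      · have hp' := Finset.HasAntidiagonal.mem_antidiagonal.mp hp
        have ha : p.1 < n := by
          rcases Nat.eq_zero_or_pos p.2 with h1 | h1
          · exact absurd (by cases p; simp_all) hne
          · omega
        refine mul_apply_eq_zero _ _ _ fun j k hjk => ?_
        rcases lt_or_ge j 0 with hj | hj
        · exact Or.inl (hBpneg p.1 j hj)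
        rcases lt_or_ge (d : ℤ) j with hj2 | hj2
        · exact Or.inl ((IH p.1 ha j).1 hj2)
        · exact Or.inr (hBmpos p.2 k (by omega))
    · intro hi
      have h0 := key n i (by rw [abs_of_neg (by omega : i < 0)]; omega)
      rw [PowerSeries.coeff_mul, AddMonoidAlgebra.coeff_sum, Finset.sum_apply',
        Finset.sum_eq_single (0, n) (fun p hp hne => ?_) (fun h => absurd (by simp) h)] at h0
      · rwa [hBp0, one_mul] at h0
      · have hp' := Finset.HasAntidiagonal.mem_antidiagonal.mp hp
        have hb : p.2 < n := by
          rcases Nat.eq_zero_or_pos p.1 with h1 | h1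
          · exact absurd (by cases p; simp_all) hne
          · omega
        refine mul_apply_eq_zero _ _ _ fun j k hjk => ?_
        rcases lt_or_ge j 0 with hj | hj
        · exact Or.inl (hBpneg p.1 j hj)
        · exact Or.inr ((IH p.2 hb k).2 (by omega))


@[simp] lemma psi_C (e : ℤ) (a : RS) : psi e (Polynomial.C a) = liftR a :=
  Polynomial.eval₂_C _ _

@[simp] lemma psi_X (e : ℤ) : psi e Polynomial.X = PowerSeries.C (AddMonoidAlgebra.single e 1) :=
  Polynomial.eval₂_X _ _

/-- the `i`-th `x`-coefficient of a series in `E1[[t]]`, as a power series in `t` -/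
noncomputable def pcoef (W : PowerSeries E1) (i : ℤ) : RS :=
  PowerSeries.mk fun n => (PowerSeries.coeff n W).coeff i

@[simp] lemma coeff_pcoef (W : PowerSeries E1) (i : ℤ) (n : ℕ) :
    PowerSeries.coeff n (pcoef W i) = (PowerSeries.coeff n W).coeff i :=
  PowerSeries.coeff_mk _ _

/-- polynomial `∑_{r<M} g r X^r` -/
noncomputable def sumC (g : ℕ → RS) (M : ℕ) : Polynomial RS :=
  ∑ r ∈ Finset.range M, Polynomial.C (g r) * Polynomial.X ^ r

lemma coeff_sumC (g : ℕ → RS) (M : ℕ) (i : ℕ) :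
    (sumC g M).coeff i = if i < M then g i else 0 := by
  rw [sumC, Polynomial.finset_sum_coeff]
  simp only [Polynomial.coeff_C_mul, Polynomial.coeff_X_pow, mul_ite, mul_one, mul_zero]
  simp only [eq_comm (a := i)]
  rw [Finset.sum_ite_eq' (Finset.range M) i g]
  simp [Finset.mem_range]



lemma psi_sumC (W : PowerSeries E1) (s : ℤ) (M : ℕ)
    (hlow : ∀ (n : ℕ) (ℓ : ℤ), ℓ < -s → (PowerSeries.coeff n W).coeff ℓ = 0)
    (hhigh : ∀ (n : ℕ) (ℓ : ℤ), (M : ℤ) - s ≤ ℓ → (PowerSeries.coeff n W).coeff ℓ = 0) :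
    psi 1 (sumC (fun r => pcoef W ((r : ℤ) - s)) M) =
      PowerSeries.C (AddMonoidAlgebra.single s 1) * W := by
  ext n : 1
  apply AddMonoidAlgebra.ext
  apply Finsupp.ext
  intro ℓ
  rw [coeff_psi_apply_one, PowerSeries.coeff_C_mul,
    AddMonoidAlgebra.coeff_single_mul_apply, one_mul]
  by_cases h : 0 ≤ ℓ
  · rw [if_pos h, coeff_sumC]
    by_cases h2 : ℓ.toNat < M
    · rw [if_pos h2, coeff_pcoef]
      congr 1
      omega
    · rw [if_neg h2, hhigh n (-s + ℓ) (by omega)]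
      simp
  · rw [if_neg h, hlow n (-s + ℓ) (by omega)]


section AlgOver
variable {A L : Type*} [CommRing A] [IsDomain A] [Field L] (g : A →+* L)

/-- `y` is algebraic over the subring `g(A)` -/
def algOver (y : L) : Prop := ∃ q : Polynomial A, q ≠ 0 ∧ Polynomial.eval₂ g y q = 0

lemma algOver_iff (y : L) : algOver g y ↔ @IsAlgebraic A L _ _ g.toAlgebra y := by
  letI := g.toAlgebra
  constructor
  · rintro ⟨q, h1, h2⟩
    exact ⟨q, h1, by rwa [Polynomial.aeval_def, RingHom.algebraMap_toAlgebra]⟩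
  · rintro ⟨q, h1, h2⟩
    exact ⟨q, h1, by rwa [Polynomial.aeval_def, RingHom.algebraMap_toAlgebra] at h2⟩

variable (hg : Function.Injective g)

lemma algOver_map (a : A) : algOver g (g a) := by
  letI := g.toAlgebra
  rw [algOver_iff]
  exact isAlgebraic_algebraMap a

lemma algOver_zero : algOver g (0 : L) := by
  letI := g.toAlgebra
  rw [algOver_iff]; exact isAlgebraic_zero

lemma algOver_one : algOver g (1 : L) := by
  letI := g.toAlgebra
  rw [algOver_iff]; exact isAlgebraic_one

section ops
include hg

private lemma algOver_tower (y : L) :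
    letI := g.toAlgebra
    letI : Algebra (FractionRing A) L := (IsFractionRing.lift (g := g) hg).toAlgebra
    algOver g y ↔ IsIntegral (FractionRing A) y := by
  letI := g.toAlgebra
  letI : Algebra (FractionRing A) L := (IsFractionRing.lift (g := g) hg).toAlgebra
  haveI : IsScalarTower A (FractionRing A) L := IsScalarTower.of_algebraMap_eq fun a => by
    rw [RingHom.algebraMap_toAlgebra, RingHom.algebraMap_toAlgebra,
      IsFractionRing.lift_algebraMap]
  rw [algOver_iff, IsFractionRing.isAlgebraic_iff A (FractionRing A) L,
    isAlgebraic_iff_isIntegral]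

lemma algOver.add {x y : L} (hx : algOver g x) (hy : algOver g y) : algOver g (x + y) := by
  letI := g.toAlgebra
  letI : Algebra (FractionRing A) L := (IsFractionRing.lift (g := g) hg).toAlgebra
  rw [algOver_tower g hg] at hx hy ⊢
  exact hx.add hy

lemma algOver.mul {x y : L} (hx : algOver g x) (hy : algOver g y) : algOver g (x * y) := by
  letI := g.toAlgebra
  letI : Algebra (FractionRing A) L := (IsFractionRing.lift (g := g) hg).toAlgebra
  rw [algOver_tower g hg] at hx hy ⊢
  exact hx.mul hy

lemma algOver.sub {x y : L} (hx : algOver g x) (hy : algOver g y) : algOver g (x - y) := by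
  letI := g.toAlgebra
  letI : Algebra (FractionRing A) L := (IsFractionRing.lift (g := g) hg).toAlgebra
  rw [algOver_tower g hg] at hx hy ⊢
  exact hx.sub hy

lemma algOver.pow {x : L} (hx : algOver g x) (n : ℕ) : algOver g (x ^ n) := by
  letI := g.toAlgebra
  letI : Algebra (FractionRing A) L := (IsFractionRing.lift (g := g) hg).toAlgebra
  rw [algOver_tower g hg] at hx ⊢
  exact hx.pow n

lemma algOver.sum {ι : Type*} (s : Finset ι) (f : ι → L) (h : ∀ i ∈ s, algOver g (f i)) :
    algOver g (∑ i ∈ s, f i) := by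
  classical
  induction s using Finset.cons_induction with
  | empty => simpa using algOver_zero g
  | cons a s ha IH =>
    rw [Finset.sum_cons]
    exact (h a (Finset.mem_cons_self a s)).add g hg
      (IH fun i hi => h i (Finset.mem_cons_of_mem hi))
end ops

lemma algOver.inv {x : L} (hx : algOver g x) : algOver g x⁻¹ := by
  letI := g.toAlgebra
  rw [algOver_iff] at *
  exact IsAlgebraic.inv hx

include hg in
lemma algOver.poly_mul {f1 f2 : Polynomial L} (h1 : ∀ i, algOver g (f1.coeff i))
    (h2 : ∀ i, algOver g (f2.coeff i)) : ∀ i, algOver g ((f1 * f2).coeff i) := by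
  intro i
  rw [Polynomial.coeff_mul]
  exact algOver.sum g hg _ _ fun p _ => (h1 p.1).mul g hg (h2 p.2)

include hg in
lemma algOver_prod_coeff (s : Multiset L) (hs : ∀ β ∈ s, algOver g β) :
    ∀ i, algOver g (((s.map fun a => Polynomial.X - Polynomial.C a).prod).coeff i) := by
  induction s using Multiset.induction_on with
  | empty =>
    intro i
    simp only [Multiset.map_zero, Multiset.prod_zero, Polynomial.coeff_one]
    split_ifs
    · exact algOver_one g
    · exact algOver_zero g
  | cons a s IH =>
    intro i
    have hIH := IH fun β hβ => hs β (Multiset.mem_cons_of_mem hβ)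
    have ha := hs a (Multiset.mem_cons_self a s)
    rw [Multiset.map_cons, Multiset.prod_cons, sub_mul, Polynomial.coeff_sub,
      Polynomial.coeff_C_mul]
    refine algOver.sub g hg ?_ (ha.mul g hg (hIH i))
    cases i with
    | zero => simpa [Polynomial.mul_coeff_zero] using algOver_zero g
    | succ m => rw [Polynomial.coeff_X_mul]; exact hIH m

include hg in
/-- all coefficients of a divisor (with some coefficient equal to `1`) of a polynomial
defined over `A` are algebraic over `A` -/
lemma algOver_coeff_of_dvd [IsAlgClosed L] (W H : Polynomial L) (hdvd : W ∣ H)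
    (H2 : Polynomial A) (hH2 : H2 ≠ 0) (hH : H = H2.map g)
    (i0 : ℕ) (h0 : W.coeff i0 = 1) : ∀ i, algOver g (W.coeff i) := by
  have hW0 : W ≠ 0 := fun h => one_ne_zero (α := L) (by rw [← h0, h, Polynomial.coeff_zero])
  have hsplit : W.Splits := IsAlgClosed.splits W
  have hWG := hsplit.eq_prod_roots
  set G := (W.roots.map fun a => Polynomial.X - Polynomial.C a).prod with hGdef
  have hroots : ∀ β ∈ W.roots, algOver g β := fun β hβ => by
    have hr : W.IsRoot β := (Polynomial.mem_roots hW0).mp hβ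
    have hH0 : H.eval β = 0 :=
      Polynomial.eval_eq_zero_of_dvd_of_eval_eq_zero hdvd hr
    exact ⟨H2, hH2, by rw [Polynomial.eval₂_eq_eval_map, ← hH]; exact hH0⟩
  have hG : ∀ i, algOver g (G.coeff i) := algOver_prod_coeff g hg _ hroots
  have hc : algOver g W.leadingCoeff := by
    have h1 : W.leadingCoeff * G.coeff i0 = 1 := by
      rw [← Polynomial.coeff_C_mul, ← hWG, h0]
    rw [eq_inv_of_mul_eq_one_left h1]
    exact (hG i0).inv g
  intro i
  have : W.coeff i = W.leadingCoeff * G.coeff i := by rw [← Polynomial.coeff_C_mul, ← hWG]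
  rw [this]
  exact hc.mul g hg (hG i)

end AlgOver



private abbrev FRS := FractionRing RS
private abbrev Kbar := AlgebraicClosure FRS

noncomputable def jmap : RS →+* Kbar := (algebraMap FRS Kbar).comp (algebraMap RS FRS)

lemma jmap_inj : Function.Injective jmap :=
  (algebraMap FRS Kbar).injective.comp (IsFractionRing.injective RS FRS)

noncomputable def tauP : Polynomial ℝ →+* Kbar :=
  jmap.comp Polynomial.coeToPowerSeries.ringHom

lemma coe_ringHom_injective :
    Function.Injective (Polynomial.coeToPowerSeries.ringHom (R := ℝ)) := by
  intro a b h
  exact Polynomial.coe_injective ℝ h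

lemma tauP_inj : Function.Injective tauP := jmap_inj.comp coe_ringHom_injective

/-- `Ω = Kbar(X)` -/
private abbrev Om := RatFunc Kbar

noncomputable def rho : Polynomial RS →+* Om :=
  (algebraMap (Polynomial Kbar) Om).comp (Polynomial.mapRingHom jmap)

lemma rho_inj : Function.Injective rho :=
  (IsFractionRing.injective (Polynomial Kbar) Om).comp (Polynomial.map_injective _ jmap_inj)

/-- coefficientwise inclusion `ℝ[t][X] → ℝ[[t]][X]` -/
noncomputable def mcoe : Polynomial (Polynomial ℝ) →+* Polynomial RS :=
  Polynomial.mapRingHom Polynomial.coeToPowerSeries.ringHom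

noncomputable def tau2 : Polynomial (Polynomial ℝ) →+* Om := rho.comp mcoe

lemma bridge (W : Polynomial RS) (halg : ∀ i, algOver tauP (jmap (W.coeff i))) :
    ∃ Q : Polynomial (Polynomial (Polynomial ℝ)), Q ≠ 0 ∧ Polynomial.eval₂ mcoe W Q = 0 := by
  have htau2inj : Function.Injective tau2 := by
    apply rho_inj.comp
    exact Polynomial.map_injective _ coe_ringHom_injective
  -- X is algebraic
  have hXalg : algOver tau2 (rho Polynomial.X) := by
    refine ⟨Polynomial.X - Polynomial.C Polynomial.X, Polynomial.X_sub_C_ne_zero _, ?_⟩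
    rw [Polynomial.eval₂_sub, Polynomial.eval₂_X, Polynomial.eval₂_C]
    have : mcoe Polynomial.X = Polynomial.X := by
      simp [mcoe]
    rw [tau2, RingHom.comp_apply, this, sub_self]
  -- constants with algebraic image are algebraic
  have hcomp : tau2.comp (Polynomial.C : Polynomial ℝ →+* Polynomial (Polynomial ℝ)) =
      ((algebraMap (Polynomial Kbar) Om).comp (Polynomial.C : Kbar →+* Polynomial Kbar)).comp
        tauP := by
    apply Polynomial.ringHom_ext
    · intro a
      simp [tau2, mcoe, rho, tauP]
    · simp [tau2, mcoe, rho, tauP]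
  have hCalg : ∀ c : RS, algOver tauP (jmap c) → algOver tau2 (rho (Polynomial.C c)) := by
    rintro c ⟨q, hq, he⟩
    refine ⟨q.map Polynomial.C, fun h => hq (Polynomial.map_injective _ Polynomial.C_injective
      (by rw [h, Polynomial.map_zero])), ?_⟩
    rw [Polynomial.eval₂_map, hcomp]
    have hpt : rho (Polynomial.C c) =
        ((algebraMap (Polynomial Kbar) Om).comp (Polynomial.C : Kbar →+* Polynomial Kbar))
          (jmap c) := by
      simp [rho]
    rw [hpt, ← Polynomial.hom_eval₂, he, map_zero]
  -- W as a sum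
  have hW : rho W = ∑ i ∈ W.support, rho (Polynomial.C (W.coeff i)) * rho Polynomial.X ^ i := by
    conv_lhs => rw [Polynomial.as_sum_support W]
    rw [map_sum]
    refine Finset.sum_congr rfl fun i _ => ?_
    rw [← Polynomial.C_mul_X_pow_eq_monomial, map_mul, map_pow]
  have halgW : algOver tau2 (rho W) := by
    rw [hW]
    exact algOver.sum tau2 htau2inj _ _ fun i _ =>
      (hCalg _ (halg i)).mul tau2 htau2inj (hXalg.pow tau2 htau2inj i)
  obtain ⟨Q, hQ0, hev⟩ := halgW
  refine ⟨Q, hQ0, rho_inj ?_⟩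
  rw [map_zero, Polynomial.hom_eval₂]
  exact hev


noncomputable def uMv : Polynomial (Polynomial ℝ) →+* MvPolynomial (Fin 2) ℝ :=
  Polynomial.eval₂RingHom
    (Polynomial.eval₂RingHom (MvPolynomial.C : ℝ →+* MvPolynomial (Fin 2) ℝ)
      (MvPolynomial.X 1))
    (MvPolynomial.X 0)

noncomputable def vMv : MvPolynomial (Fin 2) ℝ →+* Polynomial (Polynomial ℝ) :=
  MvPolynomial.eval₂Hom ((Polynomial.C).comp (Polynomial.C))
    (fun i => if i = 0 then Polynomial.X else Polynomial.C Polynomial.X)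

lemma vMv_comp_uMv : vMv.comp uMv = RingHom.id _ := by
  apply Polynomial.ringHom_ext
  · intro a
    have h : (vMv.comp uMv).comp (Polynomial.C : Polynomial ℝ →+* Polynomial (Polynomial ℝ)) =
        (RingHom.id _).comp Polynomial.C := by
      apply Polynomial.ringHom_ext
      · intro r
        simp [uMv, vMv]
      · simp [uMv, vMv]
    exact RingHom.congr_fun h a
  · simp [uMv, vMv]

lemma uMv_inj : Function.Injective uMv := by
  intro a b h
  have := congrArg vMv h
  rwa [← RingHom.comp_apply, ← RingHom.comp_apply, vMv_comp_uMv, RingHom.id_apply,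
    RingHom.id_apply] at this

lemma evalXT_comp_uMv : evalXT.comp uMv = (psi 1).comp mcoe := by
  apply Polynomial.ringHom_ext
  · intro a
    have h : (evalXT.comp uMv).comp (Polynomial.C : Polynomial ℝ →+* Polynomial (Polynomial ℝ)) =
        ((psi 1).comp mcoe).comp Polynomial.C := by
      apply Polynomial.ringHom_ext
      · intro r
        simp [uMv, mcoe, psi, evalXT, liftR, Polynomial.coe_C, PowerSeries.algebraMap_apply]
      · simp [uMv, mcoe, psi, evalXT, liftR, Polynomial.coe_X, Polynomial.coe_C,
          PowerSeries.algebraMap_apply]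
    exact RingHom.congr_fun h a
  · simp [uMv, mcoe, psi, evalXT]


lemma psi_sumC_neg (W : PowerSeries E1) (M : ℕ)
    (hpos : ∀ (n : ℕ) (ℓ : ℤ), 0 < ℓ → (PowerSeries.coeff n W).coeff ℓ = 0)
    (hlow : ∀ (n : ℕ) (ℓ : ℤ), ℓ ≤ -(M : ℤ) → (PowerSeries.coeff n W).coeff ℓ = 0) :
    psi (-1) (sumC (fun r => pcoef W (-(r : ℤ))) M) = W := by
  ext n : 1
  apply AddMonoidAlgebra.ext
  apply Finsupp.ext
  intro ℓ
  rw [coeff_psi_apply_neg_one]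
  by_cases h : ℓ ≤ 0
  · rw [if_pos h, coeff_sumC]
    by_cases h2 : (-ℓ).toNat < M
    · rw [if_pos h2, coeff_pcoef]
      congr 1
      omega
    · rw [if_neg h2, hlow n ℓ (by omega)]
      simp
  · rw [if_neg h, hpos n ℓ (by omega)]

lemma evalUT_comp_uMv : evalUT.comp uMv = (psi (-1)).comp mcoe := by
  apply Polynomial.ringHom_ext
  · intro a
    have h : (evalUT.comp uMv).comp (Polynomial.C : Polynomial ℝ →+* Polynomial (Polynomial ℝ)) =
        ((psi (-1)).comp mcoe).comp Polynomial.C := by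
      apply Polynomial.ringHom_ext
      · intro r
        simp [uMv, mcoe, psi, evalUT, liftR, Polynomial.coe_C, PowerSeries.algebraMap_apply]
      · simp [uMv, mcoe, psi, evalUT, liftR, Polynomial.coe_X, Polynomial.coe_C,
          PowerSeries.algebraMap_apply]
    exact RingHom.congr_fun h a
  · simp [uMv, mcoe, psi, evalUT]

/-- if `B ∈ ℝ[x,x⁻¹][[t]]` with `B(x;0) = 1` is a Laurent polynomial
(i.e. polynomial in `t`), then in its canonical factorization `(B₀, B₊, B₋)`, the
factor `B₊` is a polynomial in `x` (bounded degree), `B₋` is a polynomial in `x⁻¹`,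
and all three factors are algebraic: `B₀` over `ℝ(t)`, `B₊` over `ℝ(x,t)` and `B₋`
over `ℝ(u,t)` with `u = x⁻¹`. -/
theorem statement10 (B : PowerSeries E1)
    (hB0 : PowerSeries.coeff 0 B = 1)
    (hpolyT : ∃ N : ℕ, ∀ n : ℕ, N ≤ n → PowerSeries.coeff n B = 0)
    (hpolyX : ∃ d : ℕ, ∀ (n : ℕ) (i : ℤ), (d : ℤ) < |i| → (PowerSeries.coeff n B).coeff i = 0)
    (B0 : PowerSeries ℝ) (Bp Bm : PowerSeries E1)
    (hfact : IsCanonicalFactorization B B0 Bp Bm) :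
    (∃ d : ℕ, ∀ (n : ℕ) (i : ℤ), (d : ℤ) < i → (PowerSeries.coeff n Bp).coeff i = 0) ∧
    (∃ d : ℕ, ∀ (n : ℕ) (i : ℤ), i < -(d : ℤ) → (PowerSeries.coeff n Bm).coeff i = 0) ∧
    (∃ P0 : Polynomial (Polynomial ℝ), P0 ≠ 0 ∧
      Polynomial.eval₂ Polynomial.coeToPowerSeries.ringHom B0 P0 = 0) ∧
    (∃ Pp : Polynomial (MvPolynomial (Fin 2) ℝ), Pp ≠ 0 ∧
      Polynomial.eval₂ evalXT Bp Pp = 0) ∧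
    (∃ Pm : Polynomial (MvPolynomial (Fin 2) ℝ), Pm ≠ 0 ∧
      Polynomial.eval₂ evalUT Bm Pm = 0) := by
  obtain ⟨heq, hBpneg, hBmpos, hB00, hBp0, hBm0, hBpn, hBmn⟩ := hfact
  obtain ⟨N, hN⟩ := hpolyT
  obtain ⟨d, hd⟩ := hpolyX
  have bounds := bp_bm_bounds B B0 Bp Bm heq hB00 hBpneg hBmpos hBp0 hBm0 d hd
  have hone0 : (1 : E1).coeff (0 : ℤ) = 1 := by
    rw [AddMonoidAlgebra.one_def]; exact Finsupp.single_eq_same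
  -- the three polynomials
  have hP : psi 1 (sumC (fun r => pcoef Bp ((r : ℤ) - (0 : ℤ))) (d + 1)) = Bp := by
    have h := psi_sumC Bp 0 (d + 1) (fun n ℓ hl => hBpneg n ℓ (by omega))
      (fun n ℓ hl => (bounds n ℓ).1 (by omega))
    rwa [← AddMonoidAlgebra.one_def, map_one, one_mul] at h
  have hQr : psi 1 (sumC (fun r => pcoef Bm ((r : ℤ) - (d : ℤ))) (d + 1)) =
      PowerSeries.C (AddMonoidAlgebra.single (d : ℤ) 1) * Bm :=
    psi_sumC Bm d (d + 1) (fun n ℓ hl => (bounds n ℓ).2 hl)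
      (fun n ℓ hl => hBmpos n ℓ (by omega))
  have hBB : psi 1 (sumC (fun r => pcoef B ((r : ℤ) - (d : ℤ))) (2 * d + 1)) =
      PowerSeries.C (AddMonoidAlgebra.single (d : ℤ) 1) * B :=
    psi_sumC B d (2 * d + 1)
      (fun n ℓ hl => hd n ℓ (by rcases abs_cases ℓ with ⟨h1, h2⟩ | ⟨h1, h2⟩ <;> omega))
      (fun n ℓ hl => hd n ℓ (by rcases abs_cases ℓ with ⟨h1, h2⟩ | ⟨h1, h2⟩ <;> omega))
  set P : Polynomial RS := sumC (fun r => pcoef Bp ((r : ℤ) - (0 : ℤ))) (d + 1) with hPdef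
  set Qr : Polynomial RS := sumC (fun r => pcoef Bm ((r : ℤ) - (d : ℤ))) (d + 1) with hQrdef
  set Bpol : Polynomial RS := sumC (fun r => pcoef B ((r : ℤ) - (d : ℤ))) (2 * d + 1)
    with hBpoldef
  have hfac : Bpol = Polynomial.C B0 * P * Qr := by
    apply psi_one_injective
    rw [map_mul, map_mul, psi_C, hP, hQr, hBB, heq, liftR]
    ring
  -- basic coefficient facts
  have hpc0 : pcoef Bp 0 = 1 := by
    ext n
    rw [coeff_pcoef, PowerSeries.coeff_one]
    split_ifs with h
    · subst h; rw [hBp0]; exact hone0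
    · exact hBpn n (by omega)
  have hmc0 : pcoef Bm 0 = 1 := by
    ext n
    rw [coeff_pcoef, PowerSeries.coeff_one]
    split_ifs with h
    · subst h; rw [hBm0]; exact hone0
    · exact hBmn n (by omega)
  have hbc0ne : pcoef B 0 ≠ 0 := fun h => by
    have h1 : (PowerSeries.coeff 0) (pcoef B 0) = 1 := by
      rw [coeff_pcoef, hB0]; exact hone0
    rw [h, map_zero] at h1
    exact zero_ne_one h1
  -- truncation
  have htrunc : ∀ r : ℤ, ((PowerSeries.trunc N (pcoef B r) : Polynomial ℝ) : RS) = pcoef B r := by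
    intro r
    ext k
    rw [Polynomial.coeff_coe, PowerSeries.coeff_trunc]
    split_ifs with h
    · rfl
    · rw [coeff_pcoef, hN k (by omega)]
      simp
  set Bpol2 : Polynomial (Polynomial ℝ) := ∑ r ∈ Finset.range (2 * d + 1),
      Polynomial.C (PowerSeries.trunc N (pcoef B ((r : ℤ) - (d : ℤ)))) * Polynomial.X ^ r
    with hBpol2def
  have hmap2 : mcoe Bpol2 = Bpol := by
    rw [hBpol2def, hBpoldef, sumC, map_sum]
    refine Finset.sum_congr rfl fun r _ => ?_
    rw [map_mul, map_pow]
    have h1 : mcoe (Polynomial.C (PowerSeries.trunc N (pcoef B ((r : ℤ) - (d : ℤ))))) =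
        Polynomial.C ((PowerSeries.trunc N (pcoef B ((r : ℤ) - (d : ℤ))) : Polynomial ℝ) : RS) := by
      rw [mcoe, Polynomial.coe_mapRingHom, Polynomial.map_C,
        Polynomial.coeToPowerSeries.ringHom_apply]
    have h2 : mcoe Polynomial.X = Polynomial.X := by
      rw [mcoe, Polynomial.coe_mapRingHom, Polynomial.map_X]
    rw [h1, h2, htrunc]
  have hBpolcd : Bpol.coeff d = pcoef B 0 := by
    rw [hBpoldef, coeff_sumC, if_pos (by omega)]
    norm_num
  have hBpol2ne : Bpol2 ≠ 0 := by
    intro h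
    have h2 : Bpol = 0 := by rw [← hmap2, h, map_zero]
    apply hbc0ne
    rw [← hBpolcd, h2, Polynomial.coeff_zero]
  -- mapping to the algebraically closed field
  have hH : Bpol.map jmap = Bpol2.map tauP := by
    rw [← hmap2, mcoe, Polynomial.coe_mapRingHom, Polynomial.map_map]
    rfl
  have hdvdP : P.map jmap ∣ Bpol.map jmap :=
    ⟨(Polynomial.C B0 * Qr).map jmap, by rw [← Polynomial.map_mul, hfac]; congr 1; ring⟩
  have hdvdQ : Qr.map jmap ∣ Bpol.map jmap :=
    ⟨(Polynomial.C B0 * P).map jmap, by rw [← Polynomial.map_mul, hfac]; congr 1; ring⟩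
  have hPalg : ∀ i, algOver tauP ((P.map jmap).coeff i) := by
    refine algOver_coeff_of_dvd tauP tauP_inj _ _ hdvdP Bpol2 hBpol2ne hH 0 ?_
    rw [Polynomial.coeff_map, hPdef, coeff_sumC, if_pos (by omega)]
    norm_num [hpc0]
  have hQalg : ∀ i, algOver tauP ((Qr.map jmap).coeff i) := by
    refine algOver_coeff_of_dvd tauP tauP_inj _ _ hdvdQ Bpol2 hBpol2ne hH d ?_
    rw [Polynomial.coeff_map, hQrdef, coeff_sumC, if_pos (by omega)]
    norm_num [hmc0]
  -- algebraicity of B0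
  have hcoeffd : pcoef B 0 = B0 * (P * Qr).coeff d := by
    rw [← hBpolcd, hfac, mul_assoc, Polynomial.coeff_C_mul]
  have hsne : jmap ((P * Qr).coeff d) ≠ 0 := by
    intro h
    have h2 : (P * Qr).coeff d = 0 := jmap_inj (by rw [h, map_zero])
    exact hbc0ne (by rw [hcoeffd, h2, mul_zero])
  have hsalg : algOver tauP (jmap ((P * Qr).coeff d)) := by
    have h1 : jmap ((P * Qr).coeff d) = ((P.map jmap) * (Qr.map jmap)).coeff d := by
      rw [← Polynomial.map_mul, Polynomial.coeff_map]
    rw [h1]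
    exact algOver.poly_mul tauP tauP_inj hPalg hQalg d
  have hB0alg : algOver tauP (jmap B0) := by
    have h1 : jmap B0 = jmap (pcoef B 0) * (jmap ((P * Qr).coeff d))⁻¹ := by
      rw [eq_mul_inv_iff_mul_eq₀ hsne, ← map_mul, ← hcoeffd]
    rw [h1]
    refine algOver.mul tauP tauP_inj ?_ (algOver.inv tauP hsalg)
    have h2 : jmap (pcoef B 0) = tauP (PowerSeries.trunc N (pcoef B 0)) := by
      show _ = jmap (Polynomial.coeToPowerSeries.ringHom _)
      rw [Polynomial.coeToPowerSeries.ringHom_apply, htrunc 0]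
    rw [h2]
    exact algOver_map tauP _
  obtain ⟨q0, hq00, hq0e⟩ := hB0alg
  have hb3 : Polynomial.eval₂ Polynomial.coeToPowerSeries.ringHom B0 q0 = 0 := by
    apply jmap_inj
    rw [map_zero, Polynomial.hom_eval₂]
    exact hq0e
  -- algebraicity of Bp
  have hPalg' : ∀ i, algOver tauP (jmap (P.coeff i)) := fun i => by
    have h := hPalg i; rwa [Polynomial.coeff_map] at h
  obtain ⟨Qp, hQp0, hQpe⟩ := bridge P hPalg'
  have hbul4 : Polynomial.eval₂ evalXT Bp (Qp.map uMv) = 0 := by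
    rw [Polynomial.eval₂_map, evalXT_comp_uMv, ← hP, ← Polynomial.hom_eval₂, hQpe, map_zero]
  -- algebraicity of Bm
  set Qm : Polynomial RS := sumC (fun r => pcoef Bm (-(r : ℤ))) (d + 1) with hQmdef
  have hQm : psi (-1) Qm = Bm :=
    psi_sumC_neg Bm (d + 1) (fun n ℓ hl => hBmpos n ℓ hl)
      (fun n ℓ hl => (bounds n ℓ).2 (by omega))
  have hQmalg : ∀ i, algOver tauP (jmap (Qm.coeff i)) := by
    intro k
    by_cases hk : k ≤ d
    · have h1 : Qm.coeff k = Qr.coeff (d - k) := by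
        rw [hQmdef, hQrdef, coeff_sumC, coeff_sumC, if_pos (by omega), if_pos (by omega)]
        have harg : -(k : ℤ) = ((d - k : ℕ) : ℤ) - (d : ℤ) := by omega
        show pcoef Bm (-(k : ℤ)) = pcoef Bm (((d - k : ℕ) : ℤ) - (d : ℤ))
        rw [harg]
      rw [h1, ← Polynomial.coeff_map]
      exact hQalg (d - k)
    · have h1 : Qm.coeff k = 0 := by rw [hQmdef, coeff_sumC, if_neg (by omega)]
      rw [h1, map_zero]
      exact algOver_zero tauP
  obtain ⟨Qq, hQq0, hQqe⟩ := bridge Qm hQmalg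
  have hbul5 : Polynomial.eval₂ evalUT Bm (Qq.map uMv) = 0 := by
    rw [Polynomial.eval₂_map, evalUT_comp_uMv, ← hQm, ← Polynomial.hom_eval₂, hQqe, map_zero]
  exact ⟨⟨d, fun n i hi => (bounds n i).1 hi⟩, ⟨d, fun n i hi => (bounds n i).2 hi⟩,
    ⟨q0, hq00, hb3⟩,
    ⟨Qp.map uMv, fun h => hQp0 (Polynomial.map_injective _ uMv_inj
      (by rw [h, Polynomial.map_zero])), hbul4⟩,
    ⟨Qq.map uMv, fun h => hQq0 (Polynomial.map_injective _ uMv_inj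
      (by rw [h, Polynomial.map_zero])), hbul5⟩⟩

end SlitPlane
end

section
/- Fix an integer k >= 1. Let B~(t) in Q[[t]] be the generating function for one-dimensional bilateral walks with steps in {-1, k}, i.e. the coefficient of t^n is the number of sequences s_0 = 0, s_1, ..., s_n of integers with s_i - s_{i-1} in {-1, k} and s_n = 0. Let U be the unique power series in Q[[t]] with U(0) = 0 satisfying U = t (1 + U)^{k+1}. Then B~(t) * (1 - k U(t^{k+1})) = 1 + U(t^{k+1}). -/
open scoped Classical

namespace SlitPlane

/-- Number of one-dimensional bilateral walks of length `n` with steps in `{-1, k}`: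
sequences of `n` steps, each equal to `-1` or `k`, whose total sum is `0`. -/
noncomputable def bilat1D (k : ℕ) (n : ℕ) : ℕ :=
  Set.ncard {l : List ℤ | l.length = n ∧ (∀ s ∈ l, s = -1 ∨ s = (k : ℤ)) ∧ l.sum = 0}

/-- The substitution `t ↦ t^(k+1)` in a power series, defined coefficientwise. -/
noncomputable def substPow (k : ℕ) (U : PowerSeries ℚ) : PowerSeries ℚ :=
  PowerSeries.mk fun n =>
    if (k + 1) ∣ n then PowerSeries.coeff (n / (k + 1)) U else 0

open Finset in

lemma sum_eq_aux (k : ℕ) (l : List ℤ) (h : ∀ s ∈ l, s = -1 ∨ s = (k:ℤ)) :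
    l.sum = (k+1) * ((Finset.univ.filter fun i : Fin l.length => l.get i = (k:ℤ)).card : ℤ)
      - l.length := by
  conv_lhs => rw [← List.ofFn_get l, List.sum_ofFn]
  have h1 : ∀ i : Fin l.length, l.get i = ((k:ℤ)+1) * (if l.get i = (k:ℤ) then (1:ℤ) else 0) - 1 := by
    intro i
    rcases h (l.get i) (l.get_mem i) with h2 | h2 <;> rw [h2] <;> simp
  calc ∑ i : Fin l.length, l.get i
      = ∑ i : Fin l.length, (((k:ℤ)+1) * (if l.get i = (k:ℤ) then (1:ℤ) else 0) - 1) :=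
        Finset.sum_congr rfl (fun i _ => h1 i)
    _ = ((k:ℤ)+1) * (∑ i : Fin l.length, (if l.get i = (k:ℤ) then (1:ℤ) else 0)) - l.length := by
        rw [Finset.sum_sub_distrib, ← Finset.mul_sum]; simp
    _ = _ := by rw [Finset.sum_boole]


lemma bilat1D_eq (k n : ℕ) :
    bilat1D k n = if (k+1) ∣ n then n.choose (n/(k+1)) else 0 := by
  classical
  by_cases hd : (k+1) ∣ n
  · obtain ⟨m, hm⟩ := hd
    have hdiv : n / (k+1) = m := by rw [hm]; exact Nat.mul_div_cancel_left m (by omega)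
    rw [if_pos ⟨m, hm⟩, hdiv]
    have e : {S : Finset (Fin n) // S.card = m} ≃
        {l : List ℤ | l.length = n ∧ (∀ s ∈ l, s = -1 ∨ s = (k : ℤ)) ∧ l.sum = 0} := by
      refine
        { toFun := fun S => ⟨List.ofFn (fun i : Fin n => if i ∈ S.1 then (k:ℤ) else -1), ?_, ?_, ?_⟩
          invFun := fun L =>
            ⟨Finset.univ.filter (fun i : Fin n => L.1.get (Fin.cast L.2.1.symm i) = (k:ℤ)), ?_⟩
          left_inv := ?_
          right_inv := ?_ }
      · simp
      · intro s hs
        rw [List.mem_ofFn] at hs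
        obtain ⟨i, hi⟩ := hs
        by_cases h : i ∈ S.1 <;> simp [h] at hi <;> [right; left] <;> omega
      · rw [List.sum_ofFn]
        have h1 : ∀ i : Fin n, (if i ∈ S.1 then (k:ℤ) else -1)
            = ((k:ℤ)+1) * (if i ∈ S.1 then (1:ℤ) else 0) - 1 := by
          intro i; by_cases h : i ∈ S.1 <;> simp [h]
        rw [Finset.sum_congr rfl (fun i _ => h1 i), Finset.sum_sub_distrib, ← Finset.mul_sum,
          Finset.sum_boole, Finset.filter_univ_mem, S.2]
        simp [hm]
      · -- card of filter = m
        have hs := sum_eq_aux k L.1 L.2.2.1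
        rw [L.2.2.2] at hs
        have hcard : (Finset.univ.filter fun i : Fin L.1.length => L.1.get i = (k:ℤ)).card
            = (Finset.univ.filter fun i : Fin n => L.1.get (Fin.cast L.2.1.symm i) = (k:ℤ)).card := by
          apply Finset.card_nbij' (fun i => Fin.cast L.2.1 i) (fun i => Fin.cast L.2.1.symm i) <;>
            simp [Fin.ext_iff, Set.MapsTo, Set.LeftInvOn, Set.RightInvOn, Set.EqOn]
        have hlen : (L.1.length : ℤ) = ((k:ℤ)+1) * m := by
          have h4 := L.2.1; rw [h4, hm]; push_cast; ring
        have h5 : ((k:ℤ)+1) * ((Finset.univ.filter fun i : Fin L.1.length =>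
            L.1.get i = (k:ℤ)).card : ℤ) = ((k:ℤ)+1) * m := by linarith
        have h6 := mul_left_cancel₀ (by positivity : ((k:ℤ)+1) ≠ 0) h5
        rw [← hcard]
        exact_mod_cast h6
      · intro S
        apply Subtype.ext
        ext i
        simp only [Finset.mem_filter, Finset.mem_univ, true_and, List.get_ofFn]
        by_cases h : i ∈ S.1 <;> simp [h]
      · intro L
        apply Subtype.ext
        apply List.ext_get (by simp [L.2.1])
        intro i h1 h2
        rcases L.2.2.1 (L.1.get ⟨i, h2⟩) (L.1.get_mem ⟨i, h2⟩) with h3 | h3 <;>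
          simp only [List.get_eq_getElem] at h3 <;> simp [List.get_ofFn, h3]
    rw [bilat1D, ← Nat.card_coe_set_eq, ← Nat.card_congr e, Nat.card_eq_fintype_card,
      Fintype.card_finset_len, Fintype.card_fin]
  · rw [if_neg hd]
    have he : {l : List ℤ | l.length = n ∧ (∀ s ∈ l, s = -1 ∨ s = (k : ℤ)) ∧ l.sum = 0} = ∅ := by
      ext l
      simp only [Set.mem_empty_iff_false, iff_false, Set.mem_setOf_eq, not_and]
      intro h1 h2 h3
      have hs := sum_eq_aux k l h2
      rw [h3] at hs
      refine hd ⟨(Finset.univ.filter fun i : Fin l.length => l.get i = (k:ℤ)).card, ?_⟩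
      have h7 : (n:ℤ) = ((k:ℤ)+1) * ((Finset.univ.filter fun i : Fin l.length => l.get i = (k:ℤ)).card : ℤ) := by
        rw [← h1]; linarith
      exact_mod_cast h7
    rw [bilat1D, he, Set.ncard_empty]


lemma coeff_substPow (k : ℕ) (W : PowerSeries ℚ) (n : ℕ) :
    PowerSeries.coeff n (substPow k W)
      = if (k + 1) ∣ n then PowerSeries.coeff (n / (k + 1)) W else 0 := by
  simp [substPow]

lemma substPow_one (k : ℕ) : substPow k (1 : PowerSeries ℚ) = 1 := by
  ext n
  rw [coeff_substPow, PowerSeries.coeff_one, PowerSeries.coeff_one]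
  rcases eq_or_ne n 0 with h | h
  · simp [h]
  · rw [if_neg h]
    split_ifs with h1 h2
    · exfalso
      obtain ⟨c, hc⟩ := h1
      rw [hc, Nat.mul_div_cancel_left c (by omega)] at h2
      exact h (by simp [hc, h2])
    · rfl
    · rfl

lemma substPow_add (k : ℕ) (W1 W2 : PowerSeries ℚ) :
    substPow k (W1 + W2) = substPow k W1 + substPow k W2 := by
  ext n
  simp only [map_add, coeff_substPow]
  split_ifs <;> simp

lemma substPow_sub (k : ℕ) (W1 W2 : PowerSeries ℚ) :
    substPow k (W1 - W2) = substPow k W1 - substPow k W2 := by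
  ext n
  simp only [map_sub, coeff_substPow]
  split_ifs <;> simp

lemma substPow_C_mul (k : ℕ) (a : ℚ) (W : PowerSeries ℚ) :
    substPow k (PowerSeries.C a * W) = PowerSeries.C a * substPow k W := by
  ext n
  simp only [coeff_substPow, PowerSeries.coeff_C_mul]
  split_ifs <;> simp

lemma substPow_mul (k : ℕ) (W1 W2 : PowerSeries ℚ) :
    substPow k (W1 * W2) = substPow k W1 * substPow k W2 := by
  ext n
  rw [PowerSeries.coeff_mul]
  simp only [coeff_substPow]
  by_cases hd : (k+1) ∣ n
  · obtain ⟨m, hm⟩ := hd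
    have hdiv : n / (k+1) = m := by rw [hm]; exact Nat.mul_div_cancel_left m (by omega)
    rw [if_pos ⟨m, hm⟩, hdiv, PowerSeries.coeff_mul]
    have key : ∑ p ∈ Finset.HasAntidiagonal.antidiagonal n,
        (if (k+1) ∣ p.1 then PowerSeries.coeff (p.1/(k+1)) W1 else 0) *
        (if (k+1) ∣ p.2 then PowerSeries.coeff (p.2/(k+1)) W2 else 0)
        = ∑ p ∈ Finset.HasAntidiagonal.antidiagonal m,
            PowerSeries.coeff p.1 W1 * PowerSeries.coeff p.2 W2 := by
      rw [← Finset.sum_filter_of_ne (s := Finset.HasAntidiagonal.antidiagonal n)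
        (f := fun p : ℕ × ℕ =>
          (if (k+1) ∣ p.1 then PowerSeries.coeff (p.1/(k+1)) W1 else 0) *
          (if (k+1) ∣ p.2 then PowerSeries.coeff (p.2/(k+1)) W2 else 0))
        (p := fun x : ℕ × ℕ => (k+1) ∣ x.1 ∧ (k+1) ∣ x.2)
        (by intro x _ hfx
            constructor
            · by_contra h; rw [if_neg h, zero_mul] at hfx; exact hfx rfl
            · by_contra h; rw [if_neg h, mul_zero] at hfx; exact hfx rfl)]
      apply Finset.sum_nbij' (i := fun p : ℕ × ℕ => (p.1/(k+1), p.2/(k+1)))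
        (j := fun p : ℕ × ℕ => ((k+1)*p.1, (k+1)*p.2))
      · intro a ha
        simp only [Finset.mem_filter, Finset.HasAntidiagonal.mem_antidiagonal] at *
        obtain ⟨hsum, ⟨p, hp⟩, ⟨q, hq⟩⟩ := ha
        rw [hp, hq, Nat.mul_div_cancel_left p (by omega), Nat.mul_div_cancel_left q (by omega)]
        have h7 : (k+1) * (p + q) = (k+1) * m := by rw [Nat.mul_add, ← hp, ← hq, hsum, hm]
        exact Nat.eq_of_mul_eq_mul_left (by omega) h7
      · intro a ha
        simp only [Finset.mem_filter, Finset.HasAntidiagonal.mem_antidiagonal] at *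
        refine ⟨by rw [← Nat.mul_add, ha, ← hm], ⟨a.1, rfl⟩, ⟨a.2, rfl⟩⟩
      · intro a ha
        simp only [Finset.mem_filter, Finset.HasAntidiagonal.mem_antidiagonal] at ha
        obtain ⟨hsum, ⟨p, hp⟩, ⟨q, hq⟩⟩ := ha
        rw [Prod.ext_iff]
        constructor <;> simp [hp, hq, Nat.mul_div_cancel_left _ (show 0 < k+1 by omega)]
      · intro a ha
        simp [Nat.mul_div_cancel_left _ (show 0 < k+1 by omega)]
      · intro a ha
        simp only [Finset.mem_filter, Finset.HasAntidiagonal.mem_antidiagonal] at ha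
        obtain ⟨hsum, h1, h2⟩ := ha
        rw [if_pos h1, if_pos h2]
    rw [key]
  · rw [if_neg hd]
    symm
    apply Finset.sum_eq_zero
    intro x hx
    rw [Finset.HasAntidiagonal.mem_antidiagonal] at hx
    by_cases h1 : (k+1) ∣ x.1
    · by_cases h2 : (k+1) ∣ x.2
      · exact absurd (hx ▸ Nat.dvd_add h1 h2) hd
      · rw [if_neg h2, mul_zero]
    · rw [if_neg h1, zero_mul]

lemma keyInduction (k : ℕ) (F : PowerSeries ℚ) (hF : F = 1 + PowerSeries.X * F^(k+1))
    (A₀ : PowerSeries ℚ) (g : ℕ → ℕ → ℚ)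
    (h0 : ∀ m, PowerSeries.coeff m A₀ = g 0 m) (hb : ∀ r, g r 0 = g 0 0)
    (hp : ∀ r m, g (r+1) (m+1) = g r (m+1) + g (r+1+k) m) :
    ∀ m r, PowerSeries.coeff m (F ^ r * A₀) = g r m := by
  have hF0 : PowerSeries.constantCoeff F = 1 := by
    rw [hF]; simp
  have step : ∀ r : ℕ, F^(r+1) = F^r + PowerSeries.X * F^(r+1+k) := by
    intro r
    rw [pow_succ]
    nth_rewrite 2 [hF]
    rw [mul_add, mul_one]
    congr 1
    rw [show r+1+k = r+(k+1) by ring, pow_add]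
    ring
  intro m
  induction m using Nat.strong_induction_on with
  | _ m ih =>
    intro r
    induction r with
    | zero => simpa using h0 m
    | succ r ihr =>
      cases m with
      | zero =>
        rw [PowerSeries.coeff_zero_eq_constantCoeff, map_mul, map_pow, hF0, one_pow, one_mul,
          ← PowerSeries.coeff_zero_eq_constantCoeff, h0 0, hb (r+1)]
      | succ m =>
        rw [step r, add_mul, map_add, ihr, mul_assoc, PowerSeries.coeff_succ_X_mul,
          ih m (by omega) (r+1+k), hp r m]

noncomputable def fc (k r m : ℕ) : ℚ :=
  if m = 0 then 1 else (r : ℚ) / (((k:ℚ)+1)*m + r) * (((k+1)*m + r).choose m : ℕ)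

lemma fc_eq_formula (k r m : ℕ) (h : 1 ≤ r + m) :
    fc k r m = (r : ℚ) / (((k:ℚ)+1)*m + r) * (((k+1)*m + r).choose m : ℕ) := by
  rcases Nat.eq_zero_or_pos m with hm | hm
  · subst hm
    have hr : 1 ≤ r := by omega
    simp only [fc, if_pos rfl, Nat.mul_zero, Nat.cast_zero, mul_zero, zero_add, Nat.choose_zero_right]
    rw [div_self (by positivity : (r:ℚ) ≠ 0)]
    simp
  · rw [fc, if_neg (by omega)]

lemma fc_pascal (k r m : ℕ) :
    fc k (r+1) (m+1) = fc k r (m+1) + fc k (r+1+k) m := by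
  obtain ⟨P, hPdef⟩ : ∃ P : ℕ, P = (k+1)*(m+1) + r := ⟨_, rfl⟩
  have e1 : (k+1)*(m+1) + (r+1) = P + 1 := by rw [hPdef]; ring
  have e2 : (k+1)*m + (r+1+k) = P := by rw [hPdef]; ring
  have hmP : m + 1 ≤ P := by
    have : m + 1 ≤ (k+1)*(m+1) := Nat.le_mul_of_pos_left _ (by omega)
    omega
  have c1 : ((P:ℚ)+1) * ((P.choose m : ℕ) : ℚ) = (((P+1).choose (m+1) : ℕ) : ℚ) * ((m:ℚ)+1) := by
    have := Nat.add_one_mul_choose_eq P m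
    exact_mod_cast congrArg (Nat.cast : ℕ → ℚ) this
  have c2 : ((P.choose (m+1) : ℕ) : ℚ) * ((P:ℚ)+1)
      = (((P+1).choose (m+1) : ℕ) : ℚ) * ((P:ℚ) - (m:ℚ)) := by
    have h := Nat.choose_mul_succ_eq P (m+1)
    have hsub : ((P + 1 - (m+1) : ℕ) : ℚ) = (P:ℚ) - (m:ℚ) := by
      have : P + 1 - (m+1) = P - m := by omega
      rw [this, Nat.cast_sub (by omega)]
    calc ((P.choose (m+1) : ℕ) : ℚ) * ((P:ℚ)+1)
        = (((P+1).choose (m+1) : ℕ) : ℚ) * ((P + 1 - (m+1) : ℕ) : ℚ) := by exact_mod_cast congrArg (Nat.cast : ℕ → ℚ) h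
      _ = _ := by rw [hsub]
  have hPc : (P:ℚ) = ((k:ℚ)+1)*((m:ℚ)+1) + (r:ℚ) := by rw [hPdef]; push_cast; ring
  have hP0 : (0:ℚ) < (P:ℚ) := by
    have : 0 < P := by omega
    exact_mod_cast this
  rw [fc_eq_formula k (r+1) (m+1) (by omega), fc_eq_formula k r (m+1) (by omega),
    fc_eq_formula k (r+1+k) m (by omega), e1, e2]
  have hd1 : ((k:ℚ)+1)*((m:ℚ)+1) + ((r:ℚ)+1) = (P:ℚ) + 1 := by rw [hPc]; push_cast; ring
  have hd2 : ((k:ℚ)+1)*(m:ℚ) + ((r:ℚ)+1+(k:ℚ)) = (P:ℚ) := by rw [hPc]; push_cast; ring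
  push_cast
  rw [hd1, hd2, ← hPdef, ← hPc]
  obtain ⟨a, ha⟩ : ∃ a : ℚ, a = (((P+1).choose (m+1) : ℕ) : ℚ) := ⟨_, rfl⟩
  obtain ⟨b, hbq⟩ : ∃ b : ℚ, b = ((P.choose (m+1) : ℕ) : ℚ) := ⟨_, rfl⟩
  obtain ⟨c, hcq⟩ : ∃ c : ℚ, c = ((P.choose m : ℕ) : ℚ) := ⟨_, rfl⟩
  rw [← ha] at c1 c2 ⊢
  rw [← hbq] at c2 ⊢
  rw [← hcq] at c1 ⊢
  have hP0' : ((P:ℚ)) ≠ 0 := ne_of_gt hP0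
  have hP1' : ((P:ℚ)) + 1 ≠ 0 := by positivity
  field_simp
  linear_combination (-(r:ℚ)) * c2 - ((r:ℚ)+1+(k:ℚ)) * c1 + a * hPc

lemma g_pascal (k r m : ℕ) :
    ((((k+1)*(m+1) + (r+1)).choose (m+1) : ℕ) : ℚ)
      = ((((k+1)*(m+1) + r).choose (m+1) : ℕ) : ℚ)
        + ((((k+1)*m + (r+1+k)).choose m : ℕ) : ℚ) := by
  have e1 : (k+1)*(m+1) + (r+1) = ((k+1)*(m+1) + r) + 1 := by ring
  have e2 : (k+1)*m + (r+1+k) = (k+1)*(m+1) + r := by ring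
  rw [e1, e2, Nat.choose_succ_succ ((k+1)*(m+1) + r) m]
  push_cast
  ring

lemma final_id (k m : ℕ) :
    ((k:ℚ)+1) * ((((k+1)*m).choose m : ℕ) : ℚ) - (k:ℚ) * ((((k+1)*m+1).choose m : ℕ) : ℚ)
      = fc k 1 m := by
  cases m with
  | zero => simp [fc]
  | succ m =>
    obtain ⟨N, hNdef⟩ : ∃ N : ℕ, N = (k+1)*(m+1) := ⟨_, rfl⟩
    have hmN : m + 1 ≤ N := by
      have : m + 1 ≤ (k+1)*(m+1) := Nat.le_mul_of_pos_left _ (by omega)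
      omega
    have c2 : ((N.choose (m+1) : ℕ) : ℚ) * ((N:ℚ)+1)
        = (((N+1).choose (m+1) : ℕ) : ℚ) * ((N:ℚ) - (m:ℚ)) := by
      have h := Nat.choose_mul_succ_eq N (m+1)
      have hsub : ((N + 1 - (m+1) : ℕ) : ℚ) = (N:ℚ) - (m:ℚ) := by
        have h9 : N + 1 - (m+1) = N - m := by omega
        rw [h9, Nat.cast_sub (by omega)]
      calc ((N.choose (m+1) : ℕ) : ℚ) * ((N:ℚ)+1)
          = (((N+1).choose (m+1) : ℕ) : ℚ) * ((N + 1 - (m+1) : ℕ) : ℚ) := by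
            exact_mod_cast congrArg (Nat.cast : ℕ → ℚ) h
        _ = _ := by rw [hsub]
    have hNc : (N:ℚ) = ((k:ℚ)+1)*((m:ℚ)+1) := by rw [hNdef]; push_cast; ring
    have hN1 : ((N:ℚ)) + 1 ≠ 0 := by positivity
    rw [fc, if_neg (by omega), ← hNdef]
    have e3 : (k+1)*(m+1) + 1 = N + 1 := by rw [hNdef]
    have e4 : ((k:ℚ)+1)*((m:ℚ)+1) + 1 = (N:ℚ) + 1 := by rw [hNc]
    push_cast
    rw [e4]
    obtain ⟨a, ha⟩ : ∃ a : ℚ, a = (((N+1).choose (m+1) : ℕ) : ℚ) := ⟨_, rfl⟩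
    obtain ⟨b, hbq⟩ : ∃ b : ℚ, b = ((N.choose (m+1) : ℕ) : ℚ) := ⟨_, rfl⟩
    rw [← ha] at c2 ⊢
    rw [← hbq] at c2 ⊢
    field_simp
    linear_combination ((k:ℚ)+1) * c2 + a * hNc


lemma core (k : ℕ) (U : PowerSeries ℚ)
    (hUeq : U = PowerSeries.X * (1 + U) ^ (k + 1)) :
    (PowerSeries.mk fun m => ((((k+1)*m).choose m : ℕ) : ℚ))
      * (1 - PowerSeries.C (k:ℚ) * U) = 1 + U := by
  set A : PowerSeries ℚ := PowerSeries.mk fun m => ((((k+1)*m).choose m : ℕ) : ℚ) with hA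
  set F : PowerSeries ℚ := 1 + U with hFdef
  have hF : F = 1 + PowerSeries.X * F^(k+1) := by rw [hFdef, ← hUeq]
  have hcF : ∀ m, PowerSeries.coeff m F = fc k 1 m := by
    have h := keyInduction k F hF 1 (fc k)
      (fun m => by
        rw [PowerSeries.coeff_one, fc]
        split_ifs with h
        · rfl
        · rw [Nat.cast_zero, zero_div, zero_mul])
      (fun r => by simp [fc])
      (fun r m => fc_pascal k r m)
    intro m
    simpa using h m 1
  have hcFA : ∀ m r, PowerSeries.coeff m (F^r * A)
      = ((((k+1)*m + r).choose m : ℕ) : ℚ) :=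
    keyInduction k F hF A (fun r m => ((((k+1)*m + r).choose m : ℕ) : ℚ))
      (fun m => by simp [hA, PowerSeries.coeff_mk])
      (fun r => by simp)
      (fun r m => g_pascal k r m)
  have hUA : U * A = F * A - A := by rw [hFdef]; ring
  have h1 : A * (1 - PowerSeries.C (k:ℚ) * U)
      = A - PowerSeries.C (k:ℚ) * (U * A) := by ring
  have hcA : ∀ m, PowerSeries.coeff m A = ((((k+1)*m).choose m : ℕ) : ℚ) := by
    intro m; simpa using hcFA m 0
  have hcFA1 : ∀ m, PowerSeries.coeff m (F * A)
      = ((((k+1)*m + 1).choose m : ℕ) : ℚ) := by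
    intro m; simpa using hcFA m 1
  rw [h1, hUA]
  ext m
  rw [map_sub, PowerSeries.coeff_C_mul, map_sub, hcF, hcA, hcFA1]
  linear_combination final_id k m

/-- let `U` be the power series with `U(0) = 0` and
`U = t(1+U)^(k+1)`; then the generating function `B~(t)` of one-dimensional
bilateral walks with steps in `{-1, k}` satisfies
`B~(t)(1 - k U(t^(k+1))) = 1 + U(t^(k+1))`. -/
theorem statement18 (k : ℕ) (hk : 1 ≤ k)
    (U : PowerSeries ℚ)
    (hU0 : PowerSeries.coeff 0 U = 0)
    (hUeq : U = PowerSeries.X * (1 + U) ^ (k + 1))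
    (B : PowerSeries ℚ)
    (hB : ∀ n : ℕ, PowerSeries.coeff n B = (bilat1D k n : ℚ)) :
    B * (1 - (k : PowerSeries ℚ) * substPow k U) = 1 + substPow k U := by
  set A : PowerSeries ℚ := PowerSeries.mk fun m => ((((k+1)*m).choose m : ℕ) : ℚ) with hA
  have hkC : ((k : ℕ) : PowerSeries ℚ) = PowerSeries.C ((k:ℕ):ℚ) :=
    (map_natCast (PowerSeries.C (R := ℚ)) k).symm
  have hBA : B = substPow k A := by
    ext n
    rw [hB, bilat1D_eq, coeff_substPow]
    split_ifs with h
    · rw [hA, PowerSeries.coeff_mk, Nat.mul_div_cancel' h]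
    · simp
  calc B * (1 - (k : PowerSeries ℚ) * substPow k U)
      = substPow k A * (1 - PowerSeries.C ((k:ℕ):ℚ) * substPow k U) := by rw [hBA, hkC]
    _ = substPow k (A * (1 - PowerSeries.C ((k:ℕ):ℚ) * U)) := by
        rw [substPow_mul, substPow_sub, substPow_one, substPow_C_mul]
    _ = substPow k (1 + U) := by rw [core k U hUeq]
    _ = 1 + substPow k U := by rw [substPow_add, substPow_one]

end SlitPlane
end
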